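/- arXiv:2003.08779 — 5 statements merged into one kernel-verified Lean document; each statement's English description precedes it below -/
import Mathlib

section
/- For every connected simple graph G with α(G) ≥ 2, the optimal proper connection number satisfies pc_opt(G) ≤ 3·α(G) − 2. -/
/-- A set of vertices is independent: pairwise nonadjacent. -/
def IndepSet {V : Type*} (G : SimpleGraph V) (s : Set V) : Prop :=
  s.Pairwise fun u v => ¬ G.Adj u v

/-- The independence number of a graph: the maximum size of an independent set. -/
noncomputable def indepNum {V : Type*} (G : SimpleGraph V) : ℕ :=
  sSup {n | ∃ t : Finset V, IndepSet G ↑t ∧ t.card = n}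

/-- An edge-colored graph is properly connected if between every pair of distinct
vertices there is a path in which no two consecutive edges have the same color. -/
def ProperlyConnected {V : Type*} (G : SimpleGraph V) (c : Sym2 V → ℕ) : Prop :=
  ∀ u v : V, u ≠ v → ∃ p : G.Walk u v, p.IsPath ∧ (p.edges.map c).Chain' (· ≠ ·)

/-- The optimal proper connection number of a monochromatic graph `G` (all edges
initially colored `1`): the minimum of `p + q` over all final colorings `c` making
`G` properly connected, where `p` is the number of recolored edges (edges whose
color is no longer `1`) and `q` is the number of distinct new colors used. -/
noncomputable def pcOpt {V : Type*} (G : SimpleGraph V) : ℕ :=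
  sInf {n | ∃ c : Sym2 V → ℕ, ProperlyConnected G c ∧
    n = {e | e ∈ G.edgeSet ∧ c e ≠ 1}.ncard
      + (c '' {e | e ∈ G.edgeSet ∧ c e ≠ 1}).ncard}

/-- The degree of a vertex. -/
noncomputable def vdeg {V : Type*} (G : SimpleGraph V) (v : V) : ℕ :=
  (G.neighborSet v).ncard

/-- The maximum degree of a graph. -/
noncomputable def maxDeg {V : Type*} (G : SimpleGraph V) : ℕ :=
  sSup {n | ∃ v, vdeg G v = n}

/-- A connected graph is α-minimal if every vertex is either a cut-vertex or its
deletion decreases the independence number. -/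
def AlphaMinimal {V : Type*} (G : SimpleGraph V) : Prop :=
  G.Connected ∧ ∀ v : V,
    ¬ (G.induce ({v}ᶜ : Set V)).Connected ∨
      indepNum (G.induce ({v}ᶜ : Set V)) < indepNum G

section AuxProof
open SimpleGraph List

variable {V : Type*} [Fintype V] {G : SimpleGraph V}

@[simp] theorem chain'_iff_isChain' {α : Type*} {R : α → α → Prop} {l : List α} :
    List.Chain' R l ↔ List.IsChain R l := Iff.rfl

lemma indep_card_le (t : Finset V) (ht : IndepSet G ↑t) : t.card ≤ _root_.indepNum G := by
  apply le_csSup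
  · refine ⟨Fintype.card V, ?_⟩
    rintro n ⟨t, -, rfl⟩
    exact t.card_le_univ
  · exact ⟨t, ht, rfl⟩

lemma exists_max_indep : ∃ I : Finset V, IndepSet G ↑I ∧ I.card = _root_.indepNum G := by
  have h0 : (0 : ℕ) ∈ {n | ∃ t : Finset V, IndepSet G ↑t ∧ t.card = n} := by
    exact ⟨∅, by simp [IndepSet], rfl⟩
  have hbdd : BddAbove {n | ∃ t : Finset V, IndepSet G ↑t ∧ t.card = n} := by
    refine ⟨Fintype.card V, ?_⟩
    rintro n ⟨t, -, rfl⟩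
    exact t.card_le_univ
  have := Nat.sSup_mem ⟨0, h0⟩ hbdd
  exact this

/-- concat preserves path property -/
lemma IsPath_concat {u v w : V} {p : G.Walk u v} (hp : p.IsPath) (h : G.Adj v w)
    (hw : w ∉ p.support) : (p.concat h).IsPath := by
  rw [SimpleGraph.Walk.isPath_def, SimpleGraph.Walk.support_concat]
  rw [SimpleGraph.Walk.isPath_def] at hp
  simp [List.concat_eq_append, List.nodup_append, hp, hw]
  intro a ha h
  exact hw (h ▸ ha)

set_option linter.unusedSectionVars false
open scoped Classical

/-- the connectivity package for the invariant -/
def GoodPair (G : SimpleGraph V) (I S : Finset V) (c : Sym2 V → ℕ) (s₁ s₂ : V) : Prop :=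
  ∃ p : G.Walk s₁ s₂, p.IsPath ∧ (p.edges.map c).Chain' (· ≠ ·) ∧
    (∀ x ∈ p.support, x ∈ S) ∧ (s₁ ∈ I → (p.edges.map c).head? ≠ some 1) ∧
    (s₂ ∈ I → (p.edges.map c).getLast? ≠ some 1)

lemma GoodPair.symm {I S : Finset V} {c : Sym2 V → ℕ} {s₁ s₂ : V}
    (h : GoodPair G I S c s₁ s₂) : GoodPair G I S c s₂ s₁ := by
  obtain ⟨p, hp, hch, hsup, h1, h2⟩ := h
  refine ⟨p.reverse, hp.reverse, ?_, ?_, ?_, ?_⟩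
  · rw [SimpleGraph.Walk.edges_reverse, List.map_reverse]
    rw [chain'_iff_isChain', List.isChain_reverse]
    exact List.IsChain.imp (@fun a b h => Ne.symm h) hch
  · intro x hx
    rw [SimpleGraph.Walk.support_reverse, List.mem_reverse] at hx
    exact hsup x hx
  · intro h
    rw [SimpleGraph.Walk.edges_reverse, List.map_reverse, List.head?_reverse]
    exact h2 h
  · intro h
    rw [SimpleGraph.Walk.edges_reverse, List.map_reverse, List.getLast?_reverse]
    exact h1 h

lemma exists_dominator {I : Finset V} (hI : IndepSet G ↑I) (hcard : I.card = _root_.indepNum G)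
    {v : V} (hv : v ∉ I) : ∃ w ∈ I, G.Adj v w := by
  by_contra h
  push_neg at h
  have hins : IndepSet G ↑(insert v I) := by
    rw [Finset.coe_insert]
    refine Set.Pairwise.insert hI ?_
    intro b hb hne
    exact ⟨fun hadj => h b hb hadj, fun hadj => h b hb (hadj.symm)⟩
  have hle := indep_card_le _ hins
  rw [Finset.card_insert_of_notMem hv, hcard] at hle
  omega

lemma exists_fresh (c : Sym2 V → ℕ) : ∃ a : ℕ, a ∉ c '' G.edgeSet ∧ a ≠ 1 ∧ a ≠ 3 := by
  have hfin : (c '' G.edgeSet ∪ {1, 3}).Finite := by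
    apply Set.Finite.union
    · exact (G.edgeSet.toFinite).image c
    · exact (Set.finite_singleton 3).insert 1 |>.subset (by norm_num)
  obtain ⟨a, ha⟩ := hfin.exists_notMem
  refine ⟨a, fun h => ha (Or.inl h), fun h => ha (Or.inr (by simp [h])), 
    fun h => ha (Or.inr (by simp [h]))⟩

structure BInv (G : SimpleGraph V) (I S : Finset V) (c : Sym2 V → ℕ) (A : Finset ℕ) : Prop where
  hrec : ∀ e ∈ G.edgeSet, c e ≠ 1 → ∀ x ∈ e, x ∈ S
  hp : {e | e ∈ G.edgeSet ∧ c e ≠ 1}.ncard ≤ 2 * ((I ∩ S).card - 1)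
  hq : c '' {e | e ∈ G.edgeSet ∧ c e ≠ 1} ⊆ ↑A ∪ {3}
  hAcard : A.card + 1 ≤ (I ∩ S).card
  hconn : ∀ s₁ ∈ S, ∀ s₂ ∈ S, s₁ ≠ s₂ → GoodPair G I S c s₁ s₂

lemma link_exists (hG : G.Connected) {I S : Finset V} (hI : IndepSet G ↑I)
    (hcard : I.card = _root_.indepNum G) (hIS : ¬ I ⊆ S) (hS : S.Nonempty) :
    ∃ s ∈ S, ∃ w ∈ I, w ∉ S ∧
      (G.Adj s w ∨
       (∃ x, x ∉ S ∧ x ∉ I ∧ G.Adj s x ∧ G.Adj x w) ∨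
       (∃ x y, x ∉ S ∧ x ∉ I ∧ y ∉ S ∧ y ∉ I ∧ G.Adj s x ∧ G.Adj x y ∧ G.Adj y w ∧
         s ≠ y ∧ x ≠ w)) := by
  classical
  set NN : Set ℕ := {n | ∃ s ∈ S, ∃ w ∈ I, w ∉ S ∧
    ∃ p : G.Walk s w, p.IsPath ∧ p.length = n} with hNN
  obtain ⟨w0, hw0I, hw0S⟩ := by
    rw [Finset.not_subset] at hIS; exact hIS
  obtain ⟨s0, hs0⟩ := hS
  have hne : NN.Nonempty := by
    obtain ⟨p0⟩ := hG.preconnected s0 w0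
    exact ⟨p0.bypass.length, s0, hs0, w0, hw0I, hw0S, p0.bypass, p0.bypass_isPath, rfl⟩
  obtain ⟨s, hsS, w, hwI, hwS, p, hp, hlen⟩ := Nat.sInf_mem hne
  have hmin : ∀ n ∈ NN, sInf NN ≤ n := fun n hn => Nat.sInf_le hn
  refine ⟨s, hsS, w, hwI, hwS, ?_⟩
  cases p with
  | nil => exact absurd hsS hwS
  | cons h q =>
    rename_i x₁
    have hx1S : x₁ ∉ S := by
      intro hx1S
      have h1 := hmin _ (⟨x₁, hx1S, w, hwI, hwS, q, hp.of_cons, rfl⟩ : q.length ∈ NN)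
      rw [← hlen] at h1
      simp only [SimpleGraph.Walk.length_cons] at h1
      omega
    cases q with
    | nil => exact Or.inl h
    | cons h2 r =>
      rename_i x₂
      have hx1I : x₁ ∉ I := by
        intro hx1I
        have h1 := hmin _ (⟨s, hsS, x₁, hx1I, hx1S, _,
          by simp [SimpleGraph.Walk.isPath_def, h.ne], rfl⟩ :
          (SimpleGraph.Walk.cons h .nil).length ∈ NN)
        rw [← hlen] at h1
        simp only [SimpleGraph.Walk.length_cons, SimpleGraph.Walk.length_nil] at h1
        omega
      cases r with
      | nil => exact Or.inr (Or.inl ⟨x₁, hx1S, hx1I, h, h2⟩)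
      | cons h3 t =>
        rename_i x₃
        have hx2S : x₂ ∉ S := by
          intro hx2S
          have h1 := hmin _ (⟨x₂, hx2S, w, hwI, hwS, _, (hp.of_cons).of_cons, rfl⟩ :
            (SimpleGraph.Walk.cons h3 t).length ∈ NN)
          rw [← hlen] at h1
          simp only [SimpleGraph.Walk.length_cons] at h1
          omega
        have hnd := hp.support_nodup
        simp only [SimpleGraph.Walk.support_cons, List.nodup_cons, List.mem_cons] at hnd
        have hx2I : x₂ ∉ I := by
          intro hx2I
          have h1 := hmin _ (⟨s, hsS, x₂, hx2I, hx2S, _, by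
            simp [SimpleGraph.Walk.isPath_def, h.ne, h2.ne]
            tauto, rfl⟩ :
            (SimpleGraph.Walk.cons h (SimpleGraph.Walk.cons h2 .nil)).length ∈ NN)
          rw [← hlen] at h1
          simp only [SimpleGraph.Walk.length_cons, SimpleGraph.Walk.length_nil] at h1
          omega
        cases t with
        | nil =>
          refine Or.inr (Or.inr ⟨x₁, x₂, hx1S, hx1I, hx2S, hx2I, h, h2, h3, ?_, ?_⟩)
          · simp only [SimpleGraph.Walk.support_nil, List.mem_singleton] at hnd
            tauto
          · simp only [SimpleGraph.Walk.support_nil, List.mem_singleton] at hnd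
            tauto
        | cons h4 u =>
          exfalso
          obtain ⟨w₁, hw₁I, hw₁adj⟩ := exists_dominator hI hcard hx1I
          by_cases hw₁S : w₁ ∈ S
          · obtain ⟨w₂, hw₂I, hw₂adj⟩ := exists_dominator hI hcard hx2I
            by_cases hw₂S : w₂ ∈ S
            · have h1 := hmin _ (⟨w₂, hw₂S, w, hwI, hwS, _,
                SimpleGraph.Walk.bypass_isPath (SimpleGraph.Walk.cons (hw₂adj.symm)
                  (SimpleGraph.Walk.cons h3 (SimpleGraph.Walk.cons h4 u))), rfl⟩ :
                ((SimpleGraph.Walk.cons (hw₂adj.symm)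
                  (SimpleGraph.Walk.cons h3 (SimpleGraph.Walk.cons h4 u))).bypass).length ∈ NN)
              have hble := SimpleGraph.Walk.length_bypass_le (SimpleGraph.Walk.cons (hw₂adj.symm)
                (SimpleGraph.Walk.cons h3 (SimpleGraph.Walk.cons h4 u)))
              rw [← hlen] at h1
              simp only [SimpleGraph.Walk.length_cons] at h1 hble
              omega
            · have h1 := hmin _ (⟨s, hsS, w₂, hw₂I, hw₂S, _,
                SimpleGraph.Walk.bypass_isPath (SimpleGraph.Walk.cons h (SimpleGraph.Walk.cons h2
                  (SimpleGraph.Walk.cons hw₂adj .nil))), rfl⟩ :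
                ((SimpleGraph.Walk.cons h (SimpleGraph.Walk.cons h2
                  (SimpleGraph.Walk.cons hw₂adj .nil))).bypass).length ∈ NN)
              have hble := SimpleGraph.Walk.length_bypass_le (SimpleGraph.Walk.cons h
                (SimpleGraph.Walk.cons h2 (SimpleGraph.Walk.cons hw₂adj .nil)))
              rw [← hlen] at h1
              simp only [SimpleGraph.Walk.length_cons, SimpleGraph.Walk.length_nil] at h1 hble
              omega
          · have h1 := hmin _ (⟨s, hsS, w₁, hw₁I, hw₁S, _,
              SimpleGraph.Walk.bypass_isPath (SimpleGraph.Walk.cons h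
                (SimpleGraph.Walk.cons hw₁adj .nil)), rfl⟩ :
              ((SimpleGraph.Walk.cons h (SimpleGraph.Walk.cons hw₁adj .nil)).bypass).length ∈ NN)
            have hble := SimpleGraph.Walk.length_bypass_le (SimpleGraph.Walk.cons h
              (SimpleGraph.Walk.cons hw₁adj .nil))
            rw [← hlen] at h1
            simp only [SimpleGraph.Walk.length_cons, SimpleGraph.Walk.length_nil] at h1 hble
            omega

lemma mem_support_of_mem_edges' {u v : V} {p : G.Walk u v} {e : Sym2 V} (he : e ∈ p.edges) :
    ∀ x ∈ e, x ∈ p.support := by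
  induction e with
  | _ a b =>
    intro x hx
    rw [Sym2.mem_iff] at hx
    rcases hx with rfl | rfl
    · exact p.fst_mem_support_of_mem_edges he
    · exact p.snd_mem_support_of_mem_edges he

lemma GoodPair.mono {I S S' : Finset V} {c c' : Sym2 V → ℕ} {s₁ s₂ : V} (hSS : S ⊆ S')
    (hcc : ∀ e ∈ G.edgeSet, (∀ z ∈ e, z ∈ S) → c' e = c e)
    (hgp : GoodPair G I S c s₁ s₂) : GoodPair G I S' c' s₁ s₂ := by
  obtain ⟨p, hp, hch, hsup, h1, h2⟩ := hgp
  have hmapeq : p.edges.map c' = p.edges.map c := by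
    apply List.map_congr_left
    intro e he
    exact hcc e (p.edges_subset_edgeSet he) (fun z hz => hsup z (mem_support_of_mem_edges' he z hz))
  exact ⟨p, hp, by rw [hmapeq]; exact hch, fun x hx => hSS (hsup x hx),
    by rw [hmapeq]; exact h1, by rw [hmapeq]; exact h2⟩

lemma append_good {σ s t : V} {c' : Sym2 V → ℕ} {P : G.Walk σ s} {L : G.Walk s t}
    (hP : P.IsPath) (hL : L.IsPath) (hdis : ∀ x ∈ L.support.tail, x ∉ P.support)
    (hchP : (P.edges.map c').Chain' (· ≠ ·)) (hchL : (L.edges.map c').Chain' (· ≠ ·))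
    (hj : ∀ cp ∈ (P.edges.map c').getLast?, ∀ cl ∈ (L.edges.map c').head?, cp ≠ cl) :
    (P.append L).IsPath ∧ ((P.append L).edges.map c').Chain' (· ≠ ·) := by
  constructor
  · rw [SimpleGraph.Walk.isPath_def, SimpleGraph.Walk.support_append, List.nodup_append]
    refine ⟨hP.support_nodup, hL.support_nodup.sublist (List.tail_sublist _), ?_⟩
    intro x hx y hy hxy
    exact hdis y hy (hxy ▸ hx)
  · rw [SimpleGraph.Walk.edges_append, List.map_append, chain'_iff_isChain', List.isChain_append]
    exact ⟨hchP, hchL, hj⟩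

lemma head?_append_left {α : Type*} {l₁ l₂ : List α} (h : l₁ ≠ []) :
    (l₁ ++ l₂).head? = l₁.head? := by cases l₁ <;> simp_all

lemma edges_ne_nil {u v : V} {p : G.Walk u v} (h : u ≠ v) : p.edges ≠ [] := by
  cases p with
  | nil => exact absurd rfl h
  | cons h q => simp [SimpleGraph.Walk.edges_cons]

lemma extend_to_new {I S S' : Finset V} {c c' : Sym2 V → ℕ} {s t : V} {a : ℕ}
    (hconn : ∀ s₁ ∈ S, ∀ s₂ ∈ S, s₁ ≠ s₂ → GoodPair G I S c s₁ s₂)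
    (hold : ∀ e ∈ G.edgeSet, (∀ z ∈ e, z ∈ S) → c' e = c e)
    (hSS' : S ⊆ S') (hsS : s ∈ S)
    (L : G.Walk s t) (hL : L.IsPath)
    (hLsupS' : ∀ z ∈ L.support, z ∈ S')
    (hLtail : ∀ z ∈ L.support.tail, z ∉ S)
    (hLch : (L.edges.map c').Chain' (· ≠ ·))
    (hLhead : (L.edges.map c').head? = some a)
    (hfresh' : ∀ e ∈ G.edgeSet, c e ≠ a)
    (ha1 : a ≠ 1)
    (hLlast : t ∈ I → (L.edges.map c').getLast? ≠ some 1) :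
    ∀ σ ∈ S, GoodPair G I S' c' σ t := by
  intro σ hσ
  have hLne : L.edges.map c' ≠ [] := by
    intro h
    rw [h] at hLhead
    exact absurd hLhead (by simp)
  by_cases hσs : σ = s
  · subst hσs
    refine ⟨L, hL, hLch, hLsupS', ?_, hLlast⟩
    intro _
    rw [hLhead]
    simp [ha1]
  · obtain ⟨P, hP, hch, hsup, h1, h2⟩ := hconn σ hσ s hsS hσs
    have hmapeq : P.edges.map c' = P.edges.map c :=
      List.map_congr_left fun e he => hold e (P.edges_subset_edgeSet he)
        (fun z hz => hsup z (mem_support_of_mem_edges' he z hz))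
    have hPne : P.edges ≠ [] := edges_ne_nil hσs
    obtain ⟨hPath, hChain⟩ := append_good hP hL
      (fun z hz hz' => hLtail z hz (hsup z hz'))
      (by rw [hmapeq]; exact hch) hLch
      (by
        intro cp hcp cl hcl
        rw [hmapeq] at hcp
        obtain ⟨e, he, rfl⟩ := List.mem_map.mp (List.mem_of_mem_getLast? hcp)
        rw [hLhead] at hcl
        simp only [Option.mem_def, Option.some.injEq] at hcl
        rw [← hcl]
        exact hfresh' e (P.edges_subset_edgeSet he))
    refine ⟨P.append L, hPath, hChain, ?_, ?_, ?_⟩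
    · intro z hz
      rw [SimpleGraph.Walk.support_append] at hz
      rcases List.mem_append.mp hz with hz | hz
      · exact hSS' (hsup z hz)
      · exact hLsupS' z (List.mem_of_mem_tail hz)
    · intro hσI
      rw [SimpleGraph.Walk.edges_append, List.map_append,
        head?_append_left (by simpa using hPne), hmapeq]
      exact h1 hσI
    · intro htI
      rw [SimpleGraph.Walk.edges_append, List.map_append,
        List.getLast?_append_of_ne_nil _ hLne]
      exact hLlast htI


lemma step (hG : G.Connected) {I S : Finset V} {c : Sym2 V → ℕ} {A : Finset ℕ}
    (hI : IndepSet G ↑I) (hcard : I.card = _root_.indepNum G)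
    (hS : S.Nonempty) (hIS : ¬ I ⊆ S) (hinv : BInv G I S c A) :
    ∃ (S' : Finset V) (c' : Sym2 V → ℕ) (A' : Finset ℕ),
      S ⊆ S' ∧ (I ∩ S').card = (I ∩ S).card + 1 ∧ BInv G I S' c' A' := by
  classical
  have hk1 : 1 ≤ (I ∩ S).card := le_trans (by omega) hinv.hAcard
  obtain ⟨s, hsS, w, hwI, hwS, hlink⟩ := link_exists hG hI hcard hIS hS
  obtain ⟨a, haf, ha1, ha3⟩ := exists_fresh (G := G) c
  have hfresh : ∀ e ∈ G.edgeSet, c e ≠ a := fun e he h => haf ⟨e, he, h⟩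
  rcases hlink with hadj | ⟨x, hxS, hxI, hsx, hxw⟩ |
    ⟨x, y, hxS, hxI, hyS, hyI, hsx, hxy, hyw, hsy, hxw⟩
  · -- link of length 1
    set c' : Sym2 V → ℕ := fun e => if e = s(s, w) then a else c e with hc'
    have hnew : c' s(s, w) = a := if_pos rfl
    have hold : ∀ e ∈ G.edgeSet, (∀ z ∈ e, z ∈ S) → c' e = c e := by
      intro e he hz
      rw [hc']
      simp only
      rw [if_neg]
      intro heq
      exact hwS (hz w (by rw [heq]; simp))
    have hcardeq : (I ∩ insert w S).card = (I ∩ S).card + 1 := by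
      have : I ∩ insert w S = insert w (I ∩ S) := by
        ext z
        simp only [Finset.mem_inter, Finset.mem_insert]
        constructor
        · rintro ⟨hzI, rfl | hzS⟩
          · exact Or.inl rfl
          · exact Or.inr ⟨hzI, hzS⟩
        · rintro (rfl | ⟨h1, h2⟩)
          · exact ⟨hwI, Or.inl rfl⟩
          · exact ⟨h1, Or.inr h2⟩
      rw [this, Finset.card_insert_of_notMem (by simp [hwS])]
    have gW : ∀ σ ∈ S, GoodPair G I (insert w S) c' σ w := by
      intro σ hσ
      by_cases hσs : σ = s
      · subst hσs
        refine ⟨.cons hadj .nil, ?_, ?_, ?_, ?_, ?_⟩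
        · simp [SimpleGraph.Walk.isPath_def, hadj.ne]
        · simp [hnew]
        · intro z hz
          simp only [SimpleGraph.Walk.support_cons, SimpleGraph.Walk.support_nil,
            List.mem_cons, List.mem_singleton] at hz
          rcases hz with rfl | rfl | h
          · exact Finset.mem_insert_of_mem hσ
          · exact Finset.mem_insert_self _ _
          · exact absurd h List.not_mem_nil
        · intro _
          simp [hnew]
          omega
        · intro _
          simp [hnew]
          omega
      · obtain ⟨P, hP, hch, hsup, h1, h2⟩ := hinv.hconn σ hσ s hsS hσs
        have hmapeq : P.edges.map c' = P.edges.map c :=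
          List.map_congr_left fun e he => hold e (P.edges_subset_edgeSet he)
            (fun z hz => hsup z (mem_support_of_mem_edges' he z hz))
        have hPne : P.edges ≠ [] := edges_ne_nil hσs
        have hLch : (((SimpleGraph.Walk.cons hadj .nil : G.Walk s w)).edges.map c').Chain' (· ≠ ·) := by
          simp [hnew]
        obtain ⟨hPath, hChain⟩ := append_good (L := (.cons hadj .nil : G.Walk s w)) hP
          (by simp [SimpleGraph.Walk.isPath_def, hadj.ne])
          (by
            intro z hz
            simp only [SimpleGraph.Walk.support_cons, SimpleGraph.Walk.support_nil,
              List.tail_cons, List.mem_singleton] at hz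
            subst hz
            exact fun hmem => hwS (hsup z hmem))
          (by rw [hmapeq]; exact hch) hLch
          (by
            intro cp hcp cl hcl
            rw [hmapeq] at hcp
            obtain ⟨e, he, rfl⟩ := List.mem_map.mp (List.mem_of_mem_getLast? hcp)
            simp only [SimpleGraph.Walk.edges_cons, SimpleGraph.Walk.edges_nil, List.map_cons,
              List.map_nil, List.head?_cons, Option.mem_def, Option.some.injEq] at hcl
            rw [← hcl, hnew]
            exact hfresh e (P.edges_subset_edgeSet he))
        refine ⟨P.append (.cons hadj .nil), hPath, hChain, ?_, ?_, ?_⟩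
        · intro z hz
          rw [SimpleGraph.Walk.support_append] at hz
          rcases List.mem_append.mp hz with hz | hz
          · exact Finset.mem_insert_of_mem (hsup z hz)
          · simp only [SimpleGraph.Walk.support_cons, SimpleGraph.Walk.support_nil,
              List.tail_cons, List.mem_singleton] at hz
            subst hz
            exact Finset.mem_insert_self _ _
        · intro hσI
          rw [SimpleGraph.Walk.edges_append, List.map_append,
            head?_append_left (by simpa using hPne), hmapeq]
          exact h1 hσI
        · intro _
          rw [SimpleGraph.Walk.edges_append, List.map_append,
            List.getLast?_append_of_ne_nil _ (by simp [hnew])]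
          simp [hnew]
          omega
    refine ⟨insert w S, c', insert a A, Finset.subset_insert _ _, hcardeq, ?_, ?_, ?_, ?_, ?_⟩
    · -- hrec
      intro e he hne z hz
      by_cases heq : e = s(s, w)
      · subst heq
        rw [Sym2.mem_iff] at hz
        rcases hz with rfl | rfl
        · exact Finset.mem_insert_of_mem hsS
        · exact Finset.mem_insert_self _ _
      · rw [hc'] at hne
        simp only [if_neg heq] at hne
        exact Finset.mem_insert_of_mem (hinv.hrec e he hne z hz)
    · -- hp
      have hsub : {e | e ∈ G.edgeSet ∧ c' e ≠ 1} ⊆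
          {e | e ∈ G.edgeSet ∧ c e ≠ 1} ∪ {s(s, w)} := by
        rintro e ⟨he, hne⟩
        by_cases heq : e = s(s, w)
        · exact Or.inr heq
        · rw [hc'] at hne
          simp only [if_neg heq] at hne
          exact Or.inl ⟨he, hne⟩
      calc {e | e ∈ G.edgeSet ∧ c' e ≠ 1}.ncard
          ≤ ({e | e ∈ G.edgeSet ∧ c e ≠ 1} ∪ {s(s, w)}).ncard :=
            Set.ncard_le_ncard hsub (Set.toFinite _)
        _ ≤ {e | e ∈ G.edgeSet ∧ c e ≠ 1}.ncard + ({s(s, w)} : Set (Sym2 V)).ncard :=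
            Set.ncard_union_le _ _
        _ ≤ 2 * ((I ∩ S).card - 1) + 1 := by
            have := hinv.hp
            simp only [Set.ncard_singleton]
            omega
        _ ≤ 2 * ((I ∩ insert w S).card - 1) := by rw [hcardeq]; omega
    · -- hq
      rintro col ⟨e, ⟨he, hne⟩, rfl⟩
      by_cases heq : e = s(s, w)
      · subst heq
        rw [hnew]
        exact Or.inl (by simp)
      · rw [hc'] at hne ⊢
        simp only [if_neg heq] at hne ⊢
        rcases hinv.hq ⟨e, ⟨he, hne⟩, rfl⟩ with h | h
        · exact Or.inl (by simp only [Finset.coe_insert, Set.mem_insert_iff]; exact Or.inr h)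
        · exact Or.inr h
    · -- hAcard
      have := hinv.hAcard
      have hc := Finset.card_insert_le a A
      rw [hcardeq]
      omega
    · -- hconn
      intro s₁ h₁ s₂ h₂ hne
      rw [Finset.mem_insert] at h₁ h₂
      rcases h₁ with rfl | h₁ <;> rcases h₂ with rfl | h₂
      · exact absurd rfl hne
      · exact (gW s₂ h₂).symm
      · exact gW s₁ h₁
      · exact (hinv.hconn s₁ h₁ s₂ h₂ hne).mono (Finset.subset_insert _ _) hold
  · -- link of length 2 : s - x - w
    have hsw : s ≠ w := fun h => hwS (h ▸ hsS)
    set S' := insert x (insert w S) with hS'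
    set c' : Sym2 V → ℕ :=
      fun e => if e = s(s, x) then a else if e = s(x, w) then 3 else c e with hc'
    have hne₂₁ : s(x, w) ≠ s(s, x) := by
      intro heq
      rcases Sym2.eq_iff.mp heq with ⟨h1, _⟩ | ⟨_, h2⟩
      · exact hsx.ne h1.symm
      · exact hsw h2.symm
    have he₁ : c' s(s, x) = a := if_pos rfl
    have he₂ : c' s(x, w) = 3 := by
      rw [hc']
      simp only
      rw [if_neg hne₂₁]
      simp
    have hold : ∀ e ∈ G.edgeSet, (∀ z ∈ e, z ∈ S) → c' e = c e := by
      intro e he hz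
      rw [hc']
      simp only
      rw [if_neg, if_neg]
      · intro heq
        exact hxS (hz x (by rw [heq]; simp))
      · intro heq
        exact hxS (hz x (by rw [heq]; simp))
    have hSsub : S ⊆ S' := by
      intro z hz
      simp only [hS', Finset.mem_insert]
      tauto
    have hcardeq : (I ∩ S').card = (I ∩ S).card + 1 := by
      have : I ∩ S' = insert w (I ∩ S) := by
        ext z
        simp only [hS', Finset.mem_inter, Finset.mem_insert]
        constructor
        · rintro ⟨hzI, rfl | rfl | hzS⟩
          · exact absurd hzI hxI
          · exact Or.inl rfl
          · exact Or.inr ⟨hzI, hzS⟩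
        · rintro (rfl | ⟨h1, h2⟩)
          · exact ⟨hwI, Or.inr (Or.inl rfl)⟩
          · exact ⟨h1, Or.inr (Or.inr h2)⟩
      rw [this, Finset.card_insert_of_notMem (by simp [hwS])]
    have hxS' : x ∈ S' := Finset.mem_insert_self _ _
    have hwS' : w ∈ S' := by simp [hS']
    -- the three link prefix walks
    have gX : ∀ σ ∈ S, GoodPair G I S' c' σ x := by
      refine extend_to_new hinv.hconn hold hSsub hsS (.cons hsx .nil)
        (by simp [SimpleGraph.Walk.isPath_def, hsx.ne]) ?_ ?_ (by simp [he₁]) (by simp [he₁])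
        hfresh ha1 (fun hxI' => absurd hxI' hxI)
      · intro z hz
        simp only [SimpleGraph.Walk.support_cons, SimpleGraph.Walk.support_nil, List.mem_cons,
          List.mem_singleton] at hz
        rcases hz with rfl | rfl | h
        · exact hSsub hsS
        · exact hxS'
        · exact absurd h List.not_mem_nil
      · intro z hz
        simp only [SimpleGraph.Walk.support_cons, SimpleGraph.Walk.support_nil,
          List.tail_cons, List.mem_singleton] at hz
        subst hz
        exact hxS
    have gW : ∀ σ ∈ S, GoodPair G I S' c' σ w := by
      refine extend_to_new hinv.hconn hold hSsub hsS (.cons hsx (.cons hxw .nil))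
        (by
          simp only [SimpleGraph.Walk.isPath_def, SimpleGraph.Walk.support_cons,
            SimpleGraph.Walk.support_nil]
          simp [hsx.ne, hxw.ne, hsw])
        ?_ ?_ (by simp [he₁, he₂, ha3]) (by simp [he₁]) hfresh ha1
        (fun _ => by simp [he₁, he₂])
      · intro z hz
        simp only [SimpleGraph.Walk.support_cons, SimpleGraph.Walk.support_nil, List.mem_cons,
          List.mem_singleton] at hz
        rcases hz with rfl | rfl | rfl | h
        · exact hSsub hsS
        · exact hxS'
        · exact hwS'
        · exact absurd h List.not_mem_nil
      · intro z hz
        simp only [SimpleGraph.Walk.support_cons, SimpleGraph.Walk.support_nil,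
          List.tail_cons, List.mem_cons, List.mem_singleton] at hz
        rcases hz with rfl | rfl | h
        · exact hxS
        · exact hwS
        · exact absurd h List.not_mem_nil
    have gXW : GoodPair G I S' c' x w := by
      refine ⟨.cons hxw .nil, by simp [SimpleGraph.Walk.isPath_def, hxw.ne], by simp [he₂], ?_,
        fun hxI' => absurd hxI' hxI, fun _ => by simp [he₂]⟩
      intro z hz
      simp only [SimpleGraph.Walk.support_cons, SimpleGraph.Walk.support_nil, List.mem_cons,
        List.mem_singleton] at hz
      rcases hz with rfl | rfl | h
      · exact hxS'
      · exact hwS'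
      · exact absurd h List.not_mem_nil
    refine ⟨S', c', insert a A, hSsub, hcardeq, ?_, ?_, ?_, ?_, ?_⟩
    · intro e he hne z hz
      by_cases heq : e = s(s, x)
      · subst heq
        rw [Sym2.mem_iff] at hz
        rcases hz with rfl | rfl
        · exact hSsub hsS
        · exact hxS'
      · by_cases heq2 : e = s(x, w)
        · subst heq2
          rw [Sym2.mem_iff] at hz
          rcases hz with rfl | rfl
          · exact hxS'
          · exact hwS'
        · rw [hc'] at hne
          simp only [if_neg heq, if_neg heq2] at hne
          exact hSsub (hinv.hrec e he hne z hz)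
    · have hsub : {e | e ∈ G.edgeSet ∧ c' e ≠ 1} ⊆
          {e | e ∈ G.edgeSet ∧ c e ≠ 1} ∪ {s(s, x), s(x, w)} := by
        rintro e ⟨he, hne⟩
        by_cases heq : e = s(s, x)
        · exact Or.inr (Or.inl heq)
        · by_cases heq2 : e = s(x, w)
          · exact Or.inr (Or.inr heq2)
          · rw [hc'] at hne
            simp only [if_neg heq, if_neg heq2] at hne
            exact Or.inl ⟨he, hne⟩
      calc {e | e ∈ G.edgeSet ∧ c' e ≠ 1}.ncard
          ≤ ({e | e ∈ G.edgeSet ∧ c e ≠ 1} ∪ {s(s, x), s(x, w)}).ncard :=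
            Set.ncard_le_ncard hsub (Set.toFinite _)
        _ ≤ {e | e ∈ G.edgeSet ∧ c e ≠ 1}.ncard + ({s(s, x), s(x, w)} : Set (Sym2 V)).ncard :=
            Set.ncard_union_le _ _
        _ ≤ 2 * ((I ∩ S).card - 1) + 2 := by
            have h1 := hinv.hp
            have h2 : ({s(s, x), s(x, w)} : Set (Sym2 V)).ncard ≤ 2 := by
              have := Set.ncard_insert_le (s(s, x)) ({s(x, w)} : Set (Sym2 V))
              simp only [Set.ncard_singleton] at this
              omega
            omega
        _ ≤ 2 * ((I ∩ S').card - 1) := by rw [hcardeq]; omega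
    · rintro col ⟨e, ⟨he, hne⟩, rfl⟩
      by_cases heq : e = s(s, x)
      · subst heq
        rw [he₁]
        exact Or.inl (by simp)
      · by_cases heq2 : e = s(x, w)
        · subst heq2
          rw [he₂]
          exact Or.inr rfl
        · rw [hc'] at hne ⊢
          simp only [if_neg heq, if_neg heq2] at hne ⊢
          rcases hinv.hq ⟨e, ⟨he, hne⟩, rfl⟩ with h | h
          · exact Or.inl (by simp only [Finset.coe_insert, Set.mem_insert_iff]; exact Or.inr h)
          · exact Or.inr h
    · have := hinv.hAcard
      have hc := Finset.card_insert_le a A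
      rw [hcardeq]
      omega
    · intro s₁ h₁ s₂ h₂ hne
      simp only [hS', Finset.mem_insert] at h₁ h₂
      rcases h₁ with rfl | rfl | h₁ <;> rcases h₂ with rfl | rfl | h₂
      · exact absurd rfl hne
      · exact gXW
      · exact (gX s₂ h₂).symm
      · exact gXW.symm
      · exact absurd rfl hne
      · exact (gW s₂ h₂).symm
      · exact gX s₁ h₁
      · exact gW s₁ h₁
      · exact (hinv.hconn s₁ h₁ s₂ h₂ hne).mono hSsub hold
  · -- link of length 3 : s - x - y - w
    have hsw : s ≠ w := fun h => hwS (h ▸ hsS)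
    set S' := insert x (insert y (insert w S)) with hS'
    set c' : Sym2 V → ℕ :=
      fun e => if e = s(s, x) then a else if e = s(y, w) then 3 else c e with hc'
    have hne₂₁ : s(y, w) ≠ s(s, x) := by
      intro heq
      rcases Sym2.eq_iff.mp heq with ⟨h1, _⟩ | ⟨_, h2⟩
      · exact hsy h1.symm
      · exact hsw h2.symm
    have he₁ : c' s(s, x) = a := if_pos rfl
    have he₂ : c' s(y, w) = 3 := by
      rw [hc']
      simp only
      rw [if_neg hne₂₁]
      simp
    have hmid : c' s(x, y) = 1 := by
      have hne1 : s(x, y) ≠ s(s, x) := by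
        intro heq
        rcases Sym2.eq_iff.mp heq with ⟨h1, _⟩ | ⟨_, h2⟩
        · exact hsx.ne h1.symm
        · exact hsy h2.symm
      have hne2 : s(x, y) ≠ s(y, w) := by
        intro heq
        rcases Sym2.eq_iff.mp heq with ⟨h1, _⟩ | ⟨h1, _⟩
        · exact hxy.ne h1
        · exact hxw h1
      rw [hc']
      simp only
      rw [if_neg hne1, if_neg hne2]
      by_contra hne
      exact hxS (hinv.hrec s(x, y) hxy hne x (by simp))
    have hold : ∀ e ∈ G.edgeSet, (∀ z ∈ e, z ∈ S) → c' e = c e := by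
      intro e he hz
      rw [hc']
      simp only
      rw [if_neg, if_neg]
      · intro heq
        exact hyS (hz y (by rw [heq]; simp))
      · intro heq
        exact hxS (hz x (by rw [heq]; simp))
    have hSsub : S ⊆ S' := by
      intro z hz
      simp only [hS', Finset.mem_insert]
      tauto
    have hcardeq : (I ∩ S').card = (I ∩ S).card + 1 := by
      have : I ∩ S' = insert w (I ∩ S) := by
        ext z
        simp only [hS', Finset.mem_inter, Finset.mem_insert]
        constructor
        · rintro ⟨hzI, rfl | rfl | rfl | hzS⟩
          · exact absurd hzI hxI
          · exact absurd hzI hyI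
          · exact Or.inl rfl
          · exact Or.inr ⟨hzI, hzS⟩
        · rintro (rfl | ⟨h1, h2⟩)
          · exact ⟨hwI, Or.inr (Or.inr (Or.inl rfl))⟩
          · exact ⟨h1, Or.inr (Or.inr (Or.inr h2))⟩
      rw [this, Finset.card_insert_of_notMem (by simp [hwS])]
    have hxS' : x ∈ S' := Finset.mem_insert_self _ _
    have hyS' : y ∈ S' := by simp [hS']
    have hwS' : w ∈ S' := by simp [hS']
    have gX : ∀ σ ∈ S, GoodPair G I S' c' σ x := by
      refine extend_to_new hinv.hconn hold hSsub hsS (.cons hsx .nil)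
        (by simp [SimpleGraph.Walk.isPath_def, hsx.ne]) ?_ ?_ (by simp [he₁]) (by simp [he₁])
        hfresh ha1 (fun hxI' => absurd hxI' hxI)
      · intro z hz
        simp only [SimpleGraph.Walk.support_cons, SimpleGraph.Walk.support_nil, List.mem_cons,
          List.mem_singleton] at hz
        rcases hz with rfl | rfl | h
        · exact hSsub hsS
        · exact hxS'
        · exact absurd h List.not_mem_nil
      · intro z hz
        simp only [SimpleGraph.Walk.support_cons, SimpleGraph.Walk.support_nil,
          List.tail_cons, List.mem_singleton] at hz
        subst hz
        exact hxS
    have gY : ∀ σ ∈ S, GoodPair G I S' c' σ y := by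
      refine extend_to_new hinv.hconn hold hSsub hsS (.cons hsx (.cons hxy .nil))
        (by
          simp only [SimpleGraph.Walk.isPath_def, SimpleGraph.Walk.support_cons,
            SimpleGraph.Walk.support_nil]
          simp [hsx.ne, hxy.ne, hsy])
        ?_ ?_ (by simp [he₁, hmid, ha1]) (by simp [he₁]) hfresh ha1
        (fun hyI' => absurd hyI' hyI)
      · intro z hz
        simp only [SimpleGraph.Walk.support_cons, SimpleGraph.Walk.support_nil, List.mem_cons,
          List.mem_singleton] at hz
        rcases hz with rfl | rfl | rfl | h
        · exact hSsub hsS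
        · exact hxS'
        · exact hyS'
        · exact absurd h List.not_mem_nil
      · intro z hz
        simp only [SimpleGraph.Walk.support_cons, SimpleGraph.Walk.support_nil,
          List.tail_cons, List.mem_cons, List.mem_singleton] at hz
        rcases hz with rfl | rfl | h
        · exact hxS
        · exact hyS
        · exact absurd h List.not_mem_nil
    have gW : ∀ σ ∈ S, GoodPair G I S' c' σ w := by
      refine extend_to_new hinv.hconn hold hSsub hsS
        (.cons hsx (.cons hxy (.cons hyw .nil)))
        (by
          simp only [SimpleGraph.Walk.isPath_def, SimpleGraph.Walk.support_cons,
            SimpleGraph.Walk.support_nil]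
          simp [hsx.ne, hxy.ne, hyw.ne, hsy, hsw, hxw])
        ?_ ?_ (by simp [he₁, hmid, he₂, ha1]) (by simp [he₁]) hfresh ha1
        (fun _ => by simp [he₁, hmid, he₂])
      · intro z hz
        simp only [SimpleGraph.Walk.support_cons, SimpleGraph.Walk.support_nil, List.mem_cons,
          List.mem_singleton] at hz
        rcases hz with rfl | rfl | rfl | rfl | h
        · exact hSsub hsS
        · exact hxS'
        · exact hyS'
        · exact hwS'
        · exact absurd h List.not_mem_nil
      · intro z hz
        simp only [SimpleGraph.Walk.support_cons, SimpleGraph.Walk.support_nil,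
          List.tail_cons, List.mem_cons, List.mem_singleton] at hz
        rcases hz with rfl | rfl | rfl | h
        · exact hxS
        · exact hyS
        · exact hwS
        · exact absurd h List.not_mem_nil
    have gXY : GoodPair G I S' c' x y := by
      refine ⟨.cons hxy .nil, by simp [SimpleGraph.Walk.isPath_def, hxy.ne], by simp, ?_,
        fun hxI' => absurd hxI' hxI, fun hyI' => absurd hyI' hyI⟩
      intro z hz
      simp only [SimpleGraph.Walk.support_cons, SimpleGraph.Walk.support_nil, List.mem_cons,
        List.mem_singleton] at hz
      rcases hz with rfl | rfl | h
      · exact hxS'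
      · exact hyS'
      · exact absurd h List.not_mem_nil
    have gXW : GoodPair G I S' c' x w := by
      refine ⟨.cons hxy (.cons hyw .nil), ?_, by simp [hmid, he₂], ?_,
        fun hxI' => absurd hxI' hxI, fun _ => by simp [hmid, he₂]⟩
      · simp only [SimpleGraph.Walk.isPath_def, SimpleGraph.Walk.support_cons,
          SimpleGraph.Walk.support_nil]
        simp [hxy.ne, hyw.ne, hxw]
      · intro z hz
        simp only [SimpleGraph.Walk.support_cons, SimpleGraph.Walk.support_nil, List.mem_cons,
          List.mem_singleton] at hz
        rcases hz with rfl | rfl | rfl | h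
        · exact hxS'
        · exact hyS'
        · exact hwS'
        · exact absurd h List.not_mem_nil
    have gYW : GoodPair G I S' c' y w := by
      refine ⟨.cons hyw .nil, by simp [SimpleGraph.Walk.isPath_def, hyw.ne], by simp [he₂], ?_,
        fun hyI' => absurd hyI' hyI, fun _ => by simp [he₂]⟩
      intro z hz
      simp only [SimpleGraph.Walk.support_cons, SimpleGraph.Walk.support_nil, List.mem_cons,
        List.mem_singleton] at hz
      rcases hz with rfl | rfl | h
      · exact hyS'
      · exact hwS'
      · exact absurd h List.not_mem_nil
    refine ⟨S', c', insert a A, hSsub, hcardeq, ?_, ?_, ?_, ?_, ?_⟩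
    · intro e he hne z hz
      by_cases heq : e = s(s, x)
      · subst heq
        rw [Sym2.mem_iff] at hz
        rcases hz with rfl | rfl
        · exact hSsub hsS
        · exact hxS'
      · by_cases heq2 : e = s(y, w)
        · subst heq2
          rw [Sym2.mem_iff] at hz
          rcases hz with rfl | rfl
          · exact hyS'
          · exact hwS'
        · rw [hc'] at hne
          simp only [if_neg heq, if_neg heq2] at hne
          exact hSsub (hinv.hrec e he hne z hz)
    · have hsub : {e | e ∈ G.edgeSet ∧ c' e ≠ 1} ⊆
          {e | e ∈ G.edgeSet ∧ c e ≠ 1} ∪ {s(s, x), s(y, w)} := by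
        rintro e ⟨he, hne⟩
        by_cases heq : e = s(s, x)
        · exact Or.inr (Or.inl heq)
        · by_cases heq2 : e = s(y, w)
          · exact Or.inr (Or.inr heq2)
          · rw [hc'] at hne
            simp only [if_neg heq, if_neg heq2] at hne
            exact Or.inl ⟨he, hne⟩
      calc {e | e ∈ G.edgeSet ∧ c' e ≠ 1}.ncard
          ≤ ({e | e ∈ G.edgeSet ∧ c e ≠ 1} ∪ {s(s, x), s(y, w)}).ncard :=
            Set.ncard_le_ncard hsub (Set.toFinite _)
        _ ≤ {e | e ∈ G.edgeSet ∧ c e ≠ 1}.ncard + ({s(s, x), s(y, w)} : Set (Sym2 V)).ncard :=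
            Set.ncard_union_le _ _
        _ ≤ 2 * ((I ∩ S).card - 1) + 2 := by
            have h1 := hinv.hp
            have h2 : ({s(s, x), s(y, w)} : Set (Sym2 V)).ncard ≤ 2 := by
              have := Set.ncard_insert_le (s(s, x)) ({s(y, w)} : Set (Sym2 V))
              simp only [Set.ncard_singleton] at this
              omega
            omega
        _ ≤ 2 * ((I ∩ S').card - 1) := by rw [hcardeq]; omega
    · rintro col ⟨e, ⟨he, hne⟩, rfl⟩
      by_cases heq : e = s(s, x)
      · subst heq
        rw [he₁]
        exact Or.inl (by simp)
      · by_cases heq2 : e = s(y, w)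
        · subst heq2
          rw [he₂]
          exact Or.inr rfl
        · rw [hc'] at hne ⊢
          simp only [if_neg heq, if_neg heq2] at hne ⊢
          rcases hinv.hq ⟨e, ⟨he, hne⟩, rfl⟩ with h | h
          · exact Or.inl (by simp only [Finset.coe_insert, Set.mem_insert_iff]; exact Or.inr h)
          · exact Or.inr h
    · have := hinv.hAcard
      have hc := Finset.card_insert_le a A
      rw [hcardeq]
      omega
    · intro s₁ h₁ s₂ h₂ hne
      simp only [hS', Finset.mem_insert] at h₁ h₂
      rcases h₁ with rfl | rfl | rfl | h₁ <;> rcases h₂ with rfl | rfl | rfl | h₂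
      · exact absurd rfl hne
      · exact gXY
      · exact gXW
      · exact (gX s₂ h₂).symm
      · exact gXY.symm
      · exact absurd rfl hne
      · exact gYW
      · exact (gY s₂ h₂).symm
      · exact gXW.symm
      · exact gYW.symm
      · exact absurd rfl hne
      · exact (gW s₂ h₂).symm
      · exact gX s₁ h₁
      · exact gY s₁ h₁
      · exact gW s₁ h₁
      · exact (hinv.hconn s₁ h₁ s₂ h₂ hne).mono hSsub hold

lemma build (hG : G.Connected) {I : Finset V} (hI : IndepSet G ↑I)
    (hcard : I.card = _root_.indepNum G) (hne : I.Nonempty) :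
    ∃ (S : Finset V) (c : Sym2 V → ℕ) (A : Finset ℕ), I ⊆ S ∧ BInv G I S c A := by
  classical
  obtain ⟨w₁, hw₁⟩ := hne
  suffices h : ∀ n (S : Finset V) (c : Sym2 V → ℕ) (A : Finset ℕ), S.Nonempty →
      BInv G I S c A → (I \ S).card = n →
      ∃ S' c' A', I ⊆ S' ∧ BInv G I S' c' A' by
    refine h (I \ {w₁}).card {w₁} (fun _ => 1) ∅ ⟨w₁, Finset.mem_singleton_self w₁⟩ ?_ rfl
    refine ⟨fun e he hne => absurd rfl hne, ?_, ?_, ?_, ?_⟩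
    · have : {e | e ∈ G.edgeSet ∧ (fun _ => 1) e ≠ 1} = (∅ : Set (Sym2 V)) := by
        ext e; simp
      rw [this, Set.ncard_empty]
      omega
    · have : {e | e ∈ G.edgeSet ∧ (fun _ => 1) e ≠ 1} = (∅ : Set (Sym2 V)) := by
        ext e; simp
      rw [this]
      simp
    · have : I ∩ {w₁} = {w₁} := Finset.inter_singleton_of_mem hw₁
      rw [this]
      simp
    · intro s₁ h₁ s₂ h₂ hne
      rw [Finset.mem_singleton] at h₁ h₂
      exact absurd (h₁.trans h₂.symm) hne
  intro n
  induction n using Nat.strong_induction_on with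
  | _ n ih =>
    intro S c A hS hinv hn
    by_cases hIS : I ⊆ S
    · exact ⟨S, c, A, hIS, hinv⟩
    · obtain ⟨S', c', A', hSS', hcard', hinv'⟩ := step hG hI hcard hS hIS hinv
      have hdrop : (I \ S').card < n := by
        have e1 : (I ∩ S).card + (I \ S).card = I.card := Finset.card_inter_add_card_sdiff I S
        have e2 : (I ∩ S').card + (I \ S').card = I.card := Finset.card_inter_add_card_sdiff I S'
        omega
      exact ih _ hdrop S' c' A' (hS.mono hSS') hinv' rfl

lemma pc_pair_symm {c : Sym2 V → ℕ} {u v : V}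
    (h : ∃ p : G.Walk u v, p.IsPath ∧ (p.edges.map c).Chain' (· ≠ ·)) :
    ∃ p : G.Walk v u, p.IsPath ∧ (p.edges.map c).Chain' (· ≠ ·) := by
  obtain ⟨p, hp, hch⟩ := h
  refine ⟨p.reverse, hp.reverse, ?_⟩
  rw [SimpleGraph.Walk.edges_reverse, List.map_reverse, chain'_iff_isChain', List.isChain_reverse]
  exact List.IsChain.imp (@fun a b h => Ne.symm h) hch

theorem main_thm (hG : G.Connected) (hα : 2 ≤ _root_.indepNum G) :
    pcOpt G ≤ 3 * _root_.indepNum G - 2 := by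
  classical
  obtain ⟨I, hI, hIcard⟩ := exists_max_indep (G := G)
  have hα2 : 2 ≤ I.card := by rw [hIcard]; exact hα
  have hne : I.Nonempty := Finset.card_pos.mp (by omega)
  obtain ⟨S, c, A, hIS, hinv⟩ := build hG hI hIcard hne
  have hone : ∀ u, u ∉ S → ∀ w, G.Adj u w → c s(u, w) = 1 := by
    intro u huS w hadj
    by_contra hne'
    exact huS (hinv.hrec s(u, w) hadj hne' u (by simp))
  have oneS : ∀ u v : V, u ∉ S → v ∈ S → ¬ G.Adj u v →
      ∃ p : G.Walk u v, p.IsPath ∧ (p.edges.map c).Chain' (· ≠ ·) := by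
    intro u v huS hvS hadj
    have huI : u ∉ I := fun h => huS (hIS h)
    obtain ⟨w₀, hw₀I, hw₀adj⟩ := exists_dominator hI hIcard huI
    have hw₀v : w₀ ≠ v := by rintro rfl; exact hadj hw₀adj
    obtain ⟨P, hP, hch, hsup, h1, h2⟩ := hinv.hconn w₀ (hIS hw₀I) v hvS hw₀v
    refine ⟨.cons hw₀adj P, hP.cons (fun hmem => huS (hsup u hmem)), ?_⟩
    rw [SimpleGraph.Walk.edges_cons, List.map_cons, chain'_iff_isChain', List.isChain_cons]
    refine ⟨?_, hch⟩
    intro b hb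
    rw [hone u huS w₀ hw₀adj]
    intro hb1
    apply h1 hw₀I
    rw [← hb1] at hb
    exact hb
  have twoS : ∀ u v : V, u ∉ S → v ∉ S → ¬ G.Adj u v → u ≠ v →
      ∃ p : G.Walk u v, p.IsPath ∧ (p.edges.map c).Chain' (· ≠ ·) := by
    intro u v huS hvS hadj huv
    have huI : u ∉ I := fun h => huS (hIS h)
    have hvI : v ∉ I := fun h => hvS (hIS h)
    obtain ⟨wu, hwuI, hwuadj⟩ := exists_dominator hI hIcard huI
    obtain ⟨wv, hwvI, hwvadj⟩ := exists_dominator hI hIcard hvI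
    obtain ⟨w, w', hwI', hw'I', hwu', hwv', hww'⟩ :
        ∃ w w', w ∈ I ∧ w' ∈ I ∧ G.Adj u w ∧ G.Adj v w' ∧ w ≠ w' := by
      by_cases h : wu = wv
      · subst h
        by_contra hno
        push_neg at hno
        have hu' : ∀ z ∈ I, G.Adj u z → z = wu := fun z hz hadjz =>
          hno z wu hz hwuI hadjz hwvadj
        have hv' : ∀ z ∈ I, G.Adj v z → z = wu := by
          intro z hz hadjz
          exact (hno wu z hwuI hz hwuadj hadjz).symm
        have hindep : IndepSet G ↑(insert u (insert v (I.erase wu))) := by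
          intro p hp q hq hpq
          simp only [Finset.coe_insert, Set.mem_insert_iff, Finset.coe_erase,
            Set.mem_diff, Set.mem_singleton_iff, Finset.mem_coe, Finset.mem_erase] at hp hq
          have adj_ui : ∀ z, z ∈ I → z ≠ wu → ¬ G.Adj u z := by
            intro z hz hzwu hadjz
            exact hzwu (hu' z hz hadjz)
          have adj_vi : ∀ z, z ∈ I → z ≠ wu → ¬ G.Adj v z := by
            intro z hz hzwu hadjz
            exact hzwu (hv' z hz hadjz)
          rcases hp with rfl | rfl | ⟨hpI, hpwu⟩ <;> rcases hq with rfl | rfl | ⟨hqI, hqwu⟩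
          · exact absurd rfl hpq
          · exact hadj
          · exact adj_ui q hqI hqwu
          · exact fun hadj' => hadj (hadj'.symm)
          · exact absurd rfl hpq
          · exact adj_vi q hqI hqwu
          · exact fun hadj' => adj_ui p hpI hpwu (hadj'.symm)
          · exact fun hadj' => adj_vi p hpI hpwu (hadj'.symm)
          · exact hI hpI hqI hpq
        have hcard' := indep_card_le _ hindep
        rw [Finset.card_insert_of_notMem, Finset.card_insert_of_notMem,
          Finset.card_erase_of_mem hwuI, ← hIcard] at hcard'
        · omega
        · simp only [Finset.mem_erase]
          exact fun h => hvI h.2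
        · simp only [Finset.mem_insert, Finset.mem_erase]
          rintro (rfl | h)
          · exact huv rfl
          · exact huI h.2
      · exact ⟨wu, wv, hwuI, hwvI, hwuadj, hwvadj, h⟩
    obtain ⟨P, hP, hch, hsup, h1, h2⟩ := hinv.hconn w (hIS hwI') w' (hIS hw'I') hww'
    have hvP : v ∉ P.support := fun h => hvS (hsup v h)
    have huP : u ∉ P.support := fun h => huS (hsup u h)
    have hQ : (P.concat (hwv'.symm)).IsPath := IsPath_concat hP (hwv'.symm) hvP
    refine ⟨.cons hwu' (P.concat (hwv'.symm)), ?_, ?_⟩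
    · refine hQ.cons ?_
      rw [SimpleGraph.Walk.support_concat, List.mem_append]
      rintro (h | h)
      · exact huP h
      · rw [List.mem_singleton] at h
        exact huv h
    · rw [SimpleGraph.Walk.edges_cons, SimpleGraph.Walk.edges_concat]
      simp only [List.concat_eq_append, List.map_cons, List.map_append, List.map_nil]
      rw [chain'_iff_isChain', List.isChain_cons]
      have hPne : P.edges ≠ [] := edges_ne_nil hww'
      have hmapne : P.edges.map c ≠ [] := by simpa using hPne
      constructor
      · intro b hb
        rw [head?_append_left hmapne] at hb
        rw [hone u huS w hwu']
        intro hb1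
        apply h1 hwI'
        rw [← hb1] at hb
        exact hb
      · rw [List.isChain_append]
        refine ⟨hch, by simp, ?_⟩
        intro cp hcp cl hcl
        simp only [List.map_cons, List.map_nil, List.head?_cons, Option.mem_def,
          Option.some.injEq] at hcl
        have hcv : c s(w', v) = 1 := by
          rw [Sym2.eq_swap]
          exact hone v hvS w' hwv'
        rw [← hcl, hcv]
        intro hcp1
        apply h2 hw'I'
        rw [hcp1] at hcp
        exact hcp
  have hPC : ProperlyConnected G c := by
    intro u v huv
    by_cases hadj : G.Adj u v
    · exact ⟨.cons hadj .nil, by simp [SimpleGraph.Walk.isPath_def, huv], by simp⟩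
    by_cases huS : u ∈ S <;> by_cases hvS : v ∈ S
    · obtain ⟨p, hp, hch, -, -, -⟩ := hinv.hconn u huS v hvS huv
      exact ⟨p, hp, hch⟩
    · exact pc_pair_symm (oneS v u hvS huS (fun h => hadj (h.symm)))
    · exact oneS u v huS hvS hadj
    · exact twoS u v huS hvS hadj huv
  -- cost bound
  have hmem : {e | e ∈ G.edgeSet ∧ c e ≠ 1}.ncard
      + (c '' {e | e ∈ G.edgeSet ∧ c e ≠ 1}).ncard ∈
      {n | ∃ c : Sym2 V → ℕ, ProperlyConnected G c ∧
        n = {e | e ∈ G.edgeSet ∧ c e ≠ 1}.ncard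
          + (c '' {e | e ∈ G.edgeSet ∧ c e ≠ 1}).ncard} := ⟨c, hPC, rfl⟩
  refine le_trans (Nat.sInf_le hmem) ?_
  have hIinterS : I ∩ S = I := Finset.inter_eq_left.mpr hIS
  have hp' := hinv.hp
  rw [hIinterS, hIcard] at hp'
  have hq' : (c '' {e | e ∈ G.edgeSet ∧ c e ≠ 1}).ncard ≤ _root_.indepNum G := by
    have hsub : c '' {e | e ∈ G.edgeSet ∧ c e ≠ 1} ⊆ ↑(insert 3 A) := by
      intro z hz
      rcases hinv.hq hz with h | h
      · simp only [Finset.coe_insert, Set.mem_insert_iff]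
        exact Or.inr h
      · simp only [Finset.coe_insert, Set.mem_insert_iff]
        exact Or.inl h
    calc (c '' {e | e ∈ G.edgeSet ∧ c e ≠ 1}).ncard
        ≤ (↑(insert 3 A) : Set ℕ).ncard := Set.ncard_le_ncard hsub (Set.toFinite _)
      _ = (insert 3 A).card := Set.ncard_coe_finset _
      _ ≤ A.card + 1 := Finset.card_insert_le _ _
      _ ≤ _root_.indepNum G := by
          have := hinv.hAcard
          rw [hIinterS, hIcard] at this
          exact this
  omega

end AuxProof

/-- For every connected graph `G` with `α(G) ≥ 2`, `pc_opt(G) ≤ 3α(G) − 2`. -/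
theorem pcOpt_le_three_alpha_sub_two {V : Type*} [Fintype V] (G : SimpleGraph V)
    (hG : G.Connected) (hα : 2 ≤ indepNum G) :
    pcOpt G ≤ 3 * indepNum G - 2 :=
  main_thm (G := G) hG hα
end

section
/- Let G be a connected simple graph with α(G) = 3. If the vertex set of G can be partitioned into three cliques, then pc_opt(G) ≤ 4. -/
section
open SimpleGraph

private lemma dne' {V : Type*} {S T : Set V} {a b : V} (h : Disjoint S T) (ha : a ∈ S)
    (hb : b ∈ T) : a ≠ b := fun e => Set.disjoint_left.mp h ha (e ▸ hb)

private lemma proper_sym {V : Type*} {G : SimpleGraph V} {c : Sym2 V → ℕ} {u v : V}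
    (h : ∃ p : G.Walk u v, p.IsPath ∧ (p.edges.map c).Chain' (· ≠ ·)) :
    ∃ p : G.Walk v u, p.IsPath ∧ (p.edges.map c).Chain' (· ≠ ·) := by
  obtain ⟨p, hp, hcp⟩ := h
  refine ⟨p.reverse, hp.reverse, ?_⟩
  rw [SimpleGraph.Walk.edges_reverse, List.map_reverse, List.Chain', List.isChain_reverse]
  exact (show List.IsChain _ _ from hcp).imp fun a b h e => h e.symm

private lemma core_lemma {V : Type*} (G : SimpleGraph V) (X Y Z : Set V)
    (hX : G.IsClique X) (hY : G.IsClique Y) (hZ : G.IsClique Z)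
    (hXY : Disjoint X Y) (hXZ : Disjoint X Z) (hYZ : Disjoint Y Z)
    (hcov : ∀ v : V, v ∈ X ∨ v ∈ Y ∨ v ∈ Z)
    {x0 y0 x1 z0 : V} (hx0 : x0 ∈ X) (hy0 : y0 ∈ Y) (hx1 : x1 ∈ X) (hz0 : z0 ∈ Z)
    (e2 : G.Adj x0 y0) (e3 : G.Adj x1 z0) : pcOpt G ≤ 4 := by
  classical
  have hy0X : y0 ∉ X := fun h => dne' hXY h hy0 rfl
  have hz0X : z0 ∉ X := fun h => dne' hXZ h hz0 rfl
  have hx0Y : x0 ∉ Y := fun h => dne' hXY hx0 h rfl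
  have hz0Y : z0 ∉ Y := fun h => dne' hYZ h hz0 rfl
  have hx0Z : x0 ∉ Z := fun h => dne' hXZ hx0 h rfl
  have hx1Z : x1 ∉ Z := fun h => dne' hXZ hx1 h rfl
  set c : Sym2 V → ℕ := fun e => if e = s(x0, y0) then 2 else if e = s(x1, z0) then 3 else 1
    with hcdef
  have c2 : c s(x0, y0) = 2 := by simp [hcdef]
  have c2' : c s(y0, x0) = 2 := by rw [Sym2.eq_swap]; exact c2
  have hne32 : s(x1, z0) ≠ s(x0, y0) := by
    simp only [ne_eq, Sym2.eq_iff]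
    rintro (⟨rfl, rfl⟩ | ⟨rfl, rfl⟩)
    · exact hz0Y hy0
    · exact hy0X hx1
  have c3 : c s(x1, z0) = 3 := by simp [hcdef, hne32]
  have c3' : c s(z0, x1) = 3 := by rw [Sym2.eq_swap]; exact c3
  have cX : ∀ u v, u ∈ X → v ∈ X → c s(u, v) = 1 := by
    intro u v hu hv
    have h1 : s(u, v) ≠ s(x0, y0) := by
      simp only [ne_eq, Sym2.eq_iff]
      rintro (⟨rfl, rfl⟩ | ⟨rfl, rfl⟩)
      · exact hy0X hv
      · exact hy0X hu
    have h2 : s(u, v) ≠ s(x1, z0) := by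
      simp only [ne_eq, Sym2.eq_iff]
      rintro (⟨rfl, rfl⟩ | ⟨rfl, rfl⟩)
      · exact hz0X hv
      · exact hz0X hu
    simp [hcdef, h1, h2]
  have cY : ∀ u v, u ∈ Y → v ∈ Y → c s(u, v) = 1 := by
    intro u v hu hv
    have h1 : s(u, v) ≠ s(x0, y0) := by
      simp only [ne_eq, Sym2.eq_iff]
      rintro (⟨rfl, rfl⟩ | ⟨rfl, rfl⟩)
      · exact hx0Y hu
      · exact hx0Y hv
    have h2 : s(u, v) ≠ s(x1, z0) := by
      simp only [ne_eq, Sym2.eq_iff]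
      rintro (⟨rfl, rfl⟩ | ⟨rfl, rfl⟩)
      · exact hz0Y hv
      · exact hz0Y hu
    simp [hcdef, h1, h2]
  have cZ : ∀ u v, u ∈ Z → v ∈ Z → c s(u, v) = 1 := by
    intro u v hu hv
    have h1 : s(u, v) ≠ s(x0, y0) := by
      simp only [ne_eq, Sym2.eq_iff]
      rintro (⟨rfl, rfl⟩ | ⟨rfl, rfl⟩)
      · exact hx0Z hu
      · exact hx0Z hv
    have h2 : s(u, v) ≠ s(x1, z0) := by
      simp only [ne_eq, Sym2.eq_iff]
      rintro (⟨rfl, rfl⟩ | ⟨rfl, rfl⟩)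
      · exact hx1Z hu
      · exact hx1Z hv
    simp [hcdef, h1, h2]
  -- same-cell proper walks
  have wsame : ∀ (S : Set V), G.IsClique S → ∀ u v, u ∈ S → v ∈ S → u ≠ v →
      ∃ p : G.Walk u v, p.IsPath ∧ (p.edges.map c).Chain' (· ≠ ·) := by
    intro S hS u v hu hv huv
    exact ⟨Walk.cons (hS hu hv huv) Walk.nil, by simp [huv], by simp [List.Chain']⟩
  -- Y to X walks (colors use 2)
  have wYX : ∀ u v, u ∈ Y → v ∈ X →
      ∃ p : G.Walk u v, p.IsPath ∧ (p.edges.map c).Chain' (· ≠ ·) := by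
    intro u v hu hv
    have hyx : y0 ≠ x0 := (dne' hXY hx0 hy0).symm
    by_cases h1 : y0 = u <;> by_cases h2 : x0 = v
    · subst h1; subst h2
      exact ⟨Walk.cons e2.symm Walk.nil, by simp [hyx], by simp [List.Chain']⟩
    · subst h1
      have hxv : x0 ≠ v := h2
      have hyv : y0 ≠ v := (dne' hXY hv hy0).symm
      refine ⟨Walk.cons e2.symm (Walk.cons (hX hx0 hv hxv) Walk.nil), ?_, ?_⟩
      · simp [Walk.cons_isPath_iff, hyx, hxv, hyv]
      · simp only [Walk.edges_cons, Walk.edges_nil, List.map_cons, List.map_nil,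
          c2', cX x0 v hx0 hv]
        norm_num [List.Chain', List.isChain_cons_cons]
    · subst h2
      have huy : u ≠ y0 := fun h => h1 h.symm
      have hux : u ≠ x0 := dne' hXY.symm hu hx0
      refine ⟨Walk.cons (hY hu hy0 huy) (Walk.cons e2.symm Walk.nil), ?_, ?_⟩
      · simp [Walk.cons_isPath_iff, huy, hux, hyx]
      · simp only [Walk.edges_cons, Walk.edges_nil, List.map_cons, List.map_nil,
          c2', cY u y0 hu hy0]
        norm_num [List.Chain', List.isChain_cons_cons]
    · have huy : u ≠ y0 := fun h => h1 h.symm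
      have hxv : x0 ≠ v := h2
      have hux : u ≠ x0 := dne' hXY.symm hu hx0
      have huv : u ≠ v := dne' hXY.symm hu hv
      have hyv : y0 ≠ v := (dne' hXY hv hy0).symm
      refine ⟨Walk.cons (hY hu hy0 huy) (Walk.cons e2.symm
        (Walk.cons (hX hx0 hv hxv) Walk.nil)), ?_, ?_⟩
      · simp [Walk.cons_isPath_iff, huy, hux, huv, hyx, hyv, hxv]
      · simp only [Walk.edges_cons, Walk.edges_nil, List.map_cons, List.map_nil,
          c2', cY u y0 hu hy0, cX x0 v hx0 hv]
        norm_num [List.Chain', List.isChain_cons_cons]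
  -- Z to X walks (colors use 3)
  have wZX : ∀ u v, u ∈ Z → v ∈ X →
      ∃ p : G.Walk u v, p.IsPath ∧ (p.edges.map c).Chain' (· ≠ ·) := by
    intro u v hu hv
    have hzx : z0 ≠ x1 := (dne' hXZ hx1 hz0).symm
    by_cases h1 : z0 = u <;> by_cases h2 : x1 = v
    · subst h1; subst h2
      exact ⟨Walk.cons e3.symm Walk.nil, by simp [hzx], by simp [List.Chain']⟩
    · subst h1
      have hxv : x1 ≠ v := h2
      have hzv : z0 ≠ v := (dne' hXZ hv hz0).symm
      refine ⟨Walk.cons e3.symm (Walk.cons (hX hx1 hv hxv) Walk.nil), ?_, ?_⟩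
      · simp [Walk.cons_isPath_iff, hzx, hxv, hzv]
      · simp only [Walk.edges_cons, Walk.edges_nil, List.map_cons, List.map_nil,
          c3', cX x1 v hx1 hv]
        norm_num [List.Chain', List.isChain_cons_cons]
    · subst h2
      have huz : u ≠ z0 := fun h => h1 h.symm
      have hux : u ≠ x1 := dne' hXZ.symm hu hx1
      refine ⟨Walk.cons (hZ hu hz0 huz) (Walk.cons e3.symm Walk.nil), ?_, ?_⟩
      · simp [Walk.cons_isPath_iff, huz, hux, hzx]
      · simp only [Walk.edges_cons, Walk.edges_nil, List.map_cons, List.map_nil,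
          c3', cZ u z0 hu hz0]
        norm_num [List.Chain', List.isChain_cons_cons]
    · have huz : u ≠ z0 := fun h => h1 h.symm
      have hxv : x1 ≠ v := h2
      have hux : u ≠ x1 := dne' hXZ.symm hu hx1
      have huv : u ≠ v := dne' hXZ.symm hu hv
      have hzv : z0 ≠ v := (dne' hXZ hv hz0).symm
      refine ⟨Walk.cons (hZ hu hz0 huz) (Walk.cons e3.symm
        (Walk.cons (hX hx1 hv hxv) Walk.nil)), ?_, ?_⟩
      · simp [Walk.cons_isPath_iff, huz, hux, huv, hzx, hzv, hxv]
      · simp only [Walk.edges_cons, Walk.edges_nil, List.map_cons, List.map_nil,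
          c3', cZ u z0 hu hz0, cX x1 v hx1 hv]
        norm_num [List.Chain', List.isChain_cons_cons]
  -- Y to Z walks
  have wYZ : ∀ u v, u ∈ Y → v ∈ Z →
      ∃ p : G.Walk u v, p.IsPath ∧ (p.edges.map c).Chain' (· ≠ ·) := by
    intro u v hu hv
    have hyx : y0 ≠ x0 := (dne' hXY hx0 hy0).symm
    have hyx1 : y0 ≠ x1 := (dne' hXY hx1 hy0).symm
    have hyz : y0 ≠ z0 := dne' hYZ hy0 hz0
    have hyv : y0 ≠ v := dne' hYZ hy0 hv
    have hx0z : x0 ≠ z0 := dne' hXZ hx0 hz0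
    have hx0v : x0 ≠ v := dne' hXZ hx0 hv
    have hx1z : x1 ≠ z0 := dne' hXZ hx1 hz0
    have hx1v : x1 ≠ v := dne' hXZ hx1 hv
    by_cases h1 : y0 = u <;> by_cases h0 : x0 = x1 <;> by_cases h2 : z0 = v
    -- u = y0, x0 = x1, v = z0
    · subst h1; subst h2
      refine ⟨Walk.cons e2.symm (Walk.cons (h0 ▸ e3) Walk.nil), ?_, ?_⟩
      · simp [Walk.cons_isPath_iff, hyx, hyz, hx0z]
      · simp only [Walk.edges_cons, Walk.edges_nil, List.map_cons, List.map_nil, c2']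
        have : c s(x0, z0) = 3 := h0 ▸ c3
        rw [this]; norm_num [List.Chain', List.isChain_cons_cons]
    -- u = y0, x0 = x1, v ≠ z0
    · subst h1
      have hzv : z0 ≠ v := h2
      refine ⟨Walk.cons e2.symm (Walk.cons (h0 ▸ e3) (Walk.cons (hZ hz0 hv hzv)
        Walk.nil)), ?_, ?_⟩
      · simp [Walk.cons_isPath_iff, hyx, hyz, hyv, hx0z, hx0v, hzv]
      · simp only [Walk.edges_cons, Walk.edges_nil, List.map_cons, List.map_nil, c2',
          cZ z0 v hz0 hv]
        have : c s(x0, z0) = 3 := h0 ▸ c3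
        rw [this]; norm_num [List.Chain', List.isChain_cons_cons]
    -- u = y0, x0 ≠ x1, v = z0
    · subst h1; subst h2
      refine ⟨Walk.cons e2.symm (Walk.cons (hX hx0 hx1 h0) (Walk.cons e3 Walk.nil)),
        ?_, ?_⟩
      · simp [Walk.cons_isPath_iff, hyx, hyx1, hyz, h0, hx0z, hx1z]
      · simp only [Walk.edges_cons, Walk.edges_nil, List.map_cons, List.map_nil, c2',
          cX x0 x1 hx0 hx1, c3]
        norm_num [List.Chain', List.isChain_cons_cons]
    -- u = y0, x0 ≠ x1, v ≠ z0
    · subst h1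
      have hzv : z0 ≠ v := h2
      refine ⟨Walk.cons e2.symm (Walk.cons (hX hx0 hx1 h0) (Walk.cons e3
        (Walk.cons (hZ hz0 hv hzv) Walk.nil))), ?_, ?_⟩
      · simp [Walk.cons_isPath_iff, hyx, hyx1, hyz, hyv, h0, hx0z, hx0v, hx1z, hx1v, hzv]
      · simp only [Walk.edges_cons, Walk.edges_nil, List.map_cons, List.map_nil, c2',
          cX x0 x1 hx0 hx1, c3, cZ z0 v hz0 hv]
        norm_num [List.Chain', List.isChain_cons_cons]
    -- u ≠ y0, x0 = x1, v = z0
    · subst h2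
      have huy : u ≠ y0 := fun h => h1 h.symm
      have hux : u ≠ x0 := dne' hXY.symm hu hx0
      have huz : u ≠ z0 := dne' hYZ hu hz0
      refine ⟨Walk.cons (hY hu hy0 huy) (Walk.cons e2.symm (Walk.cons (h0 ▸ e3)
        Walk.nil)), ?_, ?_⟩
      · simp [Walk.cons_isPath_iff, huy, hux, huz, hyx, hyz, hx0z]
      · simp only [Walk.edges_cons, Walk.edges_nil, List.map_cons, List.map_nil, c2',
          cY u y0 hu hy0]
        have : c s(x0, z0) = 3 := h0 ▸ c3
        rw [this]; norm_num [List.Chain', List.isChain_cons_cons]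
    -- u ≠ y0, x0 = x1, v ≠ z0
    · have huy : u ≠ y0 := fun h => h1 h.symm
      have hzv : z0 ≠ v := h2
      have hux : u ≠ x0 := dne' hXY.symm hu hx0
      have huz : u ≠ z0 := dne' hYZ hu hz0
      have huv : u ≠ v := dne' hYZ hu hv
      refine ⟨Walk.cons (hY hu hy0 huy) (Walk.cons e2.symm (Walk.cons (h0 ▸ e3)
        (Walk.cons (hZ hz0 hv hzv) Walk.nil))), ?_, ?_⟩
      · simp [Walk.cons_isPath_iff, huy, hux, huz, huv, hyx, hyz, hyv, hx0z, hx0v, hzv]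
      · simp only [Walk.edges_cons, Walk.edges_nil, List.map_cons, List.map_nil, c2',
          cY u y0 hu hy0, cZ z0 v hz0 hv]
        have : c s(x0, z0) = 3 := h0 ▸ c3
        rw [this]; norm_num [List.Chain', List.isChain_cons_cons]
    -- u ≠ y0, x0 ≠ x1, v = z0
    · subst h2
      have huy : u ≠ y0 := fun h => h1 h.symm
      have hux : u ≠ x0 := dne' hXY.symm hu hx0
      have hux1 : u ≠ x1 := dne' hXY.symm hu hx1
      have huz : u ≠ z0 := dne' hYZ hu hz0
      refine ⟨Walk.cons (hY hu hy0 huy) (Walk.cons e2.symm (Walk.cons (hX hx0 hx1 h0)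
        (Walk.cons e3 Walk.nil))), ?_, ?_⟩
      · simp [Walk.cons_isPath_iff, huy, hux, hux1, huz, hyx, hyx1, hyz, h0, hx0z, hx1z]
      · simp only [Walk.edges_cons, Walk.edges_nil, List.map_cons, List.map_nil, c2',
          cY u y0 hu hy0, cX x0 x1 hx0 hx1, c3]
        norm_num [List.Chain', List.isChain_cons_cons]
    -- u ≠ y0, x0 ≠ x1, v ≠ z0
    · have huy : u ≠ y0 := fun h => h1 h.symm
      have hzv : z0 ≠ v := h2
      have hux : u ≠ x0 := dne' hXY.symm hu hx0
      have hux1 : u ≠ x1 := dne' hXY.symm hu hx1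
      have huz : u ≠ z0 := dne' hYZ hu hz0
      have huv : u ≠ v := dne' hYZ hu hv
      refine ⟨Walk.cons (hY hu hy0 huy) (Walk.cons e2.symm (Walk.cons (hX hx0 hx1 h0)
        (Walk.cons e3 (Walk.cons (hZ hz0 hv hzv) Walk.nil)))), ?_, ?_⟩
      · simp [Walk.cons_isPath_iff, huy, hux, hux1, huz, huv, hyx, hyx1, hyz, hyv, h0,
          hx0z, hx0v, hx1z, hx1v, hzv]
      · simp only [Walk.edges_cons, Walk.edges_nil, List.map_cons, List.map_nil, c2',
          cY u y0 hu hy0, cX x0 x1 hx0 hx1, c3, cZ z0 v hz0 hv]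
        norm_num [List.Chain', List.isChain_cons_cons]
  have hpc : ProperlyConnected G c := by
    intro u v huv
    rcases hcov u with hu | hu | hu <;> rcases hcov v with hv | hv | hv
    · exact wsame X hX u v hu hv huv
    · exact proper_sym (wYX v u hv hu)
    · exact proper_sym (wZX v u hv hu)
    · exact wYX u v hu hv
    · exact wsame Y hY u v hu hv huv
    · exact wYZ u v hu hv
    · exact wZX u v hu hv
    · exact proper_sym (wYZ v u hv hu)
    · exact wsame Z hZ u v hu hv huv
  -- cost bound
  have hsub : {e | e ∈ G.edgeSet ∧ c e ≠ 1} ⊆ {s(x0, y0), s(x1, z0)} := by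
    rintro e ⟨-, hne⟩
    by_contra h
    simp only [Set.mem_insert_iff, Set.mem_singleton_iff, not_or] at h
    simp [hcdef, h.1, h.2] at hne
  have hcard1 : {e | e ∈ G.edgeSet ∧ c e ≠ 1}.ncard ≤ 2 := by
    refine le_trans (Set.ncard_le_ncard hsub (Set.toFinite _)) ?_
    refine le_trans (Set.ncard_insert_le _ _) ?_
    simp
  have hsub2 : c '' {e | e ∈ G.edgeSet ∧ c e ≠ 1} ⊆ {2, 3} := by
    rintro n ⟨e, he, rfl⟩
    have h' := hsub he
    simp only [Set.mem_insert_iff, Set.mem_singleton_iff] at h'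
    rcases h' with h | h
    · exact Set.mem_insert_iff.mpr (Or.inl (by rw [h]; exact c2))
    · exact Set.mem_insert_iff.mpr (Or.inr (Set.mem_singleton_iff.mpr (by rw [h]; exact c3)))
  have hcard2 : (c '' {e | e ∈ G.edgeSet ∧ c e ≠ 1}).ncard ≤ 2 := by
    refine le_trans (Set.ncard_le_ncard hsub2 (Set.toFinite _)) ?_
    refine le_trans (Set.ncard_insert_le _ _) ?_
    simp
  have hmem : {e | e ∈ G.edgeSet ∧ c e ≠ 1}.ncard
      + (c '' {e | e ∈ G.edgeSet ∧ c e ≠ 1}).ncard ∈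
      {n | ∃ c : Sym2 V → ℕ, ProperlyConnected G c ∧
        n = {e | e ∈ G.edgeSet ∧ c e ≠ 1}.ncard
          + (c '' {e | e ∈ G.edgeSet ∧ c e ≠ 1}).ncard} := ⟨c, hpc, rfl⟩
  exact le_trans (Nat.sInf_le hmem) (by omega)

end

/-- If `G` is connected with `α(G) = 3` and `V(G)` can be partitioned into three
cliques, then `pc_opt(G) ≤ 4`. -/
theorem pcOpt_le_four_of_three_cliques {V : Type*} [Fintype V] (G : SimpleGraph V)
    (hG : G.Connected) (hα : indepNum G = 3) (A B C : Set V)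
    (hA : G.IsClique A) (hB : G.IsClique B) (hC : G.IsClique C)
    (hAB : Disjoint A B) (hAC : Disjoint A C) (hBC : Disjoint B C)
    (hcover : A ∪ B ∪ C = Set.univ) : pcOpt G ≤ 4 := by
  classical
  have hmem : ∀ v : V, v ∈ A ∨ v ∈ B ∨ v ∈ C := by
    intro v
    have hv : v ∈ A ∪ B ∪ C := by rw [hcover]; trivial
    rcases hv with (h | h) | h
    · exact Or.inl h
    · exact Or.inr (Or.inl h)
    · exact Or.inr (Or.inr h)
  have hne : {n | ∃ t : Finset V, IndepSet G ↑t ∧ t.card = n}.Nonempty :=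
    ⟨0, ∅, by simp [IndepSet], rfl⟩
  have hbdd : BddAbove {n | ∃ t : Finset V, IndepSet G ↑t ∧ t.card = n} :=
    ⟨Fintype.card V, by rintro n ⟨t, -, rfl⟩; simpa using Finset.card_le_univ t⟩
  have h3 : 3 ∈ {n | ∃ t : Finset V, IndepSet G ↑t ∧ t.card = n} := by
    rw [← hα]; exact Nat.sSup_mem hne hbdd
  obtain ⟨t, hind, hcard⟩ := h3
  obtain ⟨a, b, d, hab, had, hbd, rfl⟩ := Finset.card_eq_three.mp hcard
  have ma : a ∈ (↑({a, b, d} : Finset V) : Set V) := by simp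
  have mb : b ∈ (↑({a, b, d} : Finset V) : Set V) := by simp
  have md : d ∈ (↑({a, b, d} : Finset V) : Set V) := by simp
  have nab : ¬ G.Adj a b := hind ma mb hab
  have nad : ¬ G.Adj a d := hind ma md had
  have nbd : ¬ G.Adj b d := hind mb md hbd
  have hnot : ∀ (S : Set V), G.IsClique S → ∀ u w : V, u ≠ w → ¬ G.Adj u w →
      ¬(u ∈ S ∧ w ∈ S) := fun S hS u w hne' hadj h => hadj (hS h.1 h.2 hne')
  have k1 := hnot A hA a b hab nab
  have k2 := hnot A hA a d had nad
  have k3 := hnot A hA b d hbd nbd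
  have k4 := hnot B hB a b hab nab
  have k5 := hnot B hB a d had nad
  have k6 := hnot B hB b d hbd nbd
  have k7 := hnot C hC a b hab nab
  have k8 := hnot C hC a d had nad
  have k9 := hnot C hC b d hbd nbd
  have hAne : A.Nonempty := by
    rcases hmem a with h|h|h <;> rcases hmem b with h'|h'|h' <;>
        rcases hmem d with h''|h''|h'' <;>
      first
        | exact ⟨a, h⟩ | exact ⟨b, h'⟩ | exact ⟨d, h''⟩
        | exact (k4 ⟨h, h'⟩).elim | exact (k7 ⟨h, h'⟩).elim
        | exact (k5 ⟨h, h''⟩).elim | exact (k8 ⟨h, h''⟩).elim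
        | exact (k6 ⟨h', h''⟩).elim | exact (k9 ⟨h', h''⟩).elim
  have hBne : B.Nonempty := by
    rcases hmem a with h|h|h <;> rcases hmem b with h'|h'|h' <;>
        rcases hmem d with h''|h''|h'' <;>
      first
        | exact ⟨a, h⟩ | exact ⟨b, h'⟩ | exact ⟨d, h''⟩
        | exact (k1 ⟨h, h'⟩).elim | exact (k7 ⟨h, h'⟩).elim
        | exact (k2 ⟨h, h''⟩).elim | exact (k8 ⟨h, h''⟩).elim
        | exact (k3 ⟨h', h''⟩).elim | exact (k9 ⟨h', h''⟩).elim
  have hCne : C.Nonempty := by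
    rcases hmem a with h|h|h <;> rcases hmem b with h'|h'|h' <;>
        rcases hmem d with h''|h''|h'' <;>
      first
        | exact ⟨a, h⟩ | exact ⟨b, h'⟩ | exact ⟨d, h''⟩
        | exact (k1 ⟨h, h'⟩).elim | exact (k4 ⟨h, h'⟩).elim
        | exact (k2 ⟨h, h''⟩).elim | exact (k5 ⟨h, h''⟩).elim
        | exact (k3 ⟨h', h''⟩).elim | exact (k6 ⟨h', h''⟩).elim
  obtain ⟨a0, ha0⟩ := hAne
  obtain ⟨b0, hb0⟩ := hBne
  obtain ⟨c0, hc0⟩ := hCne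
  obtain ⟨w1⟩ := hG.preconnected a0 b0
  have hb0A : b0 ∉ A := fun h => dne' hAB h hb0 rfl
  obtain ⟨d1, -, hd1f, hd1s⟩ := w1.exists_boundary_dart A ha0 hb0A
  have hd1 : d1.snd ∈ B ∨ d1.snd ∈ C := by
    rcases hmem d1.snd with h | h | h
    exacts [absurd h hd1s, Or.inl h, Or.inr h]
  rcases hd1 with hB1 | hC1
  · obtain ⟨w2⟩ := hG.preconnected c0 a0
    have ha0C : a0 ∉ C := fun h => dne' hAC ha0 h rfl
    obtain ⟨d2, -, hd2f, hd2s⟩ := w2.exists_boundary_dart C hc0 ha0C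
    have hd2 : d2.snd ∈ A ∨ d2.snd ∈ B := by
      rcases hmem d2.snd with h | h | h
      exacts [Or.inl h, Or.inr h, absurd h hd2s]
    rcases hd2 with h | h
    · exact core_lemma G A B C hA hB hC hAB hAC hBC hmem hd1f hB1 h hd2f d1.adj d2.adj.symm
    · exact core_lemma G B A C hB hA hC hAB.symm hBC hAC
        (fun v => by
          rcases hmem v with h' | h' | h'
          exacts [Or.inr (Or.inl h'), Or.inl h', Or.inr (Or.inr h')])
        hB1 hd1f h hd2f d1.adj.symm d2.adj.symm
  · obtain ⟨w2⟩ := hG.preconnected b0 a0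
    have ha0B : a0 ∉ B := fun h => dne' hAB ha0 h rfl
    obtain ⟨d2, -, hd2f, hd2s⟩ := w2.exists_boundary_dart B hb0 ha0B
    have hd2 : d2.snd ∈ A ∨ d2.snd ∈ C := by
      rcases hmem d2.snd with h | h | h
      exacts [Or.inl h, absurd h hd2s, Or.inr h]
    rcases hd2 with h | h
    · exact core_lemma G A C B hA hC hB hAC hAB hBC.symm
        (fun v => by
          rcases hmem v with h' | h' | h'
          exacts [Or.inl h', Or.inr (Or.inr h'), Or.inr (Or.inl h')])
        hd1f hC1 h hd2f d1.adj d2.adj.symm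
    · exact core_lemma G C A B hC hA hB hAC.symm hBC.symm hAB
        (fun v => by
          rcases hmem v with h' | h' | h'
          exacts [Or.inr (Or.inl h'), Or.inr (Or.inr h'), Or.inl h'])
        hC1 hd1f h hd2f d1.adj.symm d2.adj.symm
end

section
/- Let G be a connected simple graph with α(G) = 3. If the vertex set of G can be partitioned into four cliques and there is a matching M of G of size three such that the four disjoint cliques together with the edges of M form a connected spanning subgraph of G, then pc_opt(G) ≤ 4. -/
section
open SimpleGraph

/-- Key lemma: prepend an edge to an alternating path, fixing clashes by shortcuts. -/
lemma alt_extend {V : Type*} [DecidableEq V] (H : SimpleGraph V) (c : Sym2 V → ℕ)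
    (hkey : ∀ a b x : V, H.Adj a b → H.Adj b x → c s(a, b) = c s(b, x) →
      a = x ∨ H.Adj a x) :
    ∀ n (v u w : V), H.Adj u w → ∀ q : H.Walk w v, q.IsPath →
      q.edges.Chain' (fun e f => c e ≠ c f) → q.length ≤ n →
      ∃ r : H.Walk u v, r.IsPath ∧ r.edges.Chain' (fun e f => c e ≠ c f) := by
  intro n
  induction n with
  | zero =>
    intro v u w h q hq hch hlen
    cases q with
    | nil => exact ⟨.cons h .nil, by simp [h.ne], List.isChain_singleton _⟩
    | cons h' q' => simp at hlen
  | succ n ih =>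
    intro v u w h q hq hch hlen
    by_cases hu : u ∈ q.support
    · refine ⟨q.dropUntil u hu, hq.dropUntil hu, ?_⟩
      refine hch.suffix ?_
      exact ⟨(q.takeUntil u hu).edges, by rw [← SimpleGraph.Walk.edges_append,
        SimpleGraph.Walk.take_spec]⟩
    · cases q with
      | nil => exact ⟨.cons h .nil, by simp [h.ne], List.isChain_singleton _⟩
      | @cons _ x _ h' q' =>
        by_cases hc : c s(u, w) = c s(w, x)
        · rcases hkey u w x h h' hc with rfl | hadj
          · exact absurd (by simp) hu
          · have hq' : q'.IsPath := hq.of_cons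
            have hch' : q'.edges.Chain' (fun e f => c e ≠ c f) := by
              have := hch.tail
              exact (by simpa using this : List.IsChain _ q'.edges)
            exact ih v u x hadj q' hq' hch' (by
              simp only [SimpleGraph.Walk.length_cons] at hlen; omega)
        · refine ⟨.cons h (.cons h' q'), hq.cons hu, ?_⟩
          rw [SimpleGraph.Walk.edges_cons, SimpleGraph.Walk.edges_cons]
          rw [SimpleGraph.Walk.edges_cons] at hch
          exact List.IsChain.cons_cons hc hch

/-- Every reachable pair is joined by an alternating path. -/
lemma alt_path {V : Type*} [DecidableEq V] (H : SimpleGraph V) (c : Sym2 V → ℕ)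
    (hkey : ∀ a b x : V, H.Adj a b → H.Adj b x → c s(a, b) = c s(b, x) →
      a = x ∨ H.Adj a x) {u v : V} (p : H.Walk u v) :
    ∃ r : H.Walk u v, r.IsPath ∧ r.edges.Chain' (fun e f => c e ≠ c f) := by
  induction p with
  | nil => exact ⟨.nil, by simp, List.isChain_nil⟩
  | @cons u w v h p ihp =>
    obtain ⟨q, hq, hch⟩ := ihp
    exact alt_extend H c hkey q.length v u w h q hq hch le_rfl

end

/-- If `G` is connected with `α(G) = 3`, `V(G)` can be partitioned into four
cliques, and there is a matching `M` of size three such that the four disjoint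
cliques together with the edges of `M` form a connected spanning subgraph of
`G`, then `pc_opt(G) ≤ 4`. -/
theorem pcOpt_le_four_of_four_cliques_and_matching {V : Type*} [Fintype V]
    (G : SimpleGraph V) (hG : G.Connected) (hα : indepNum G = 3)
    (A B C D : Set V)
    (hA : G.IsClique A) (hB : G.IsClique B) (hC : G.IsClique C) (hD : G.IsClique D)
    (hAB : Disjoint A B) (hAC : Disjoint A C) (hAD : Disjoint A D)
    (hBC : Disjoint B C) (hBD : Disjoint B D) (hCD : Disjoint C D)
    (hcover : A ∪ B ∪ C ∪ D = Set.univ)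
    (M : Finset (Sym2 V)) (hME : ↑M ⊆ G.edgeSet) (hMcard : M.card = 3)
    (hmatching : ∀ e ∈ M, ∀ f ∈ M, e ≠ f → ∀ v : V, v ∈ e → v ∉ f)
    (hconn : (SimpleGraph.fromEdgeSet
      ({e | e ∈ G.edgeSet ∧ ∃ X ∈ ({A, B, C, D} : Set (Set V)), ∀ v ∈ e, v ∈ X}
        ∪ ↑M)).Connected) :
    pcOpt G ≤ 4 := by
  classical
  set S : Set (Sym2 V) :=
    {e | e ∈ G.edgeSet ∧ ∃ X ∈ ({A, B, C, D} : Set (Set V)), ∀ v ∈ e, v ∈ X} ∪ ↑M with hS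
  set H := SimpleGraph.fromEdgeSet S with hH
  set c : Sym2 V → ℕ := fun e => if e ∈ M then 2 else 1 with hc
  have hdisj : ∀ X ∈ ({A, B, C, D} : Set (Set V)), ∀ Y ∈ ({A, B, C, D} : Set (Set V)),
      ∀ z : V, z ∈ X → z ∈ Y → X = Y := by
    intro X hX Y hY z hz1 hz2
    simp only [Set.mem_insert_iff, Set.mem_singleton_iff] at hX hY
    rcases hX with rfl | rfl | rfl | rfl <;> rcases hY with rfl | rfl | rfl | rfl <;>
      first
      | rfl
      | exact (Set.disjoint_left.mp hAB hz1 hz2).elim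
      | exact (Set.disjoint_left.mp hAC hz1 hz2).elim
      | exact (Set.disjoint_left.mp hAD hz1 hz2).elim
      | exact (Set.disjoint_left.mp hBC hz1 hz2).elim
      | exact (Set.disjoint_left.mp hBD hz1 hz2).elim
      | exact (Set.disjoint_left.mp hCD hz1 hz2).elim
      | exact (Set.disjoint_left.mp hAB.symm hz1 hz2).elim
      | exact (Set.disjoint_left.mp hAC.symm hz1 hz2).elim
      | exact (Set.disjoint_left.mp hAD.symm hz1 hz2).elim
      | exact (Set.disjoint_left.mp hBC.symm hz1 hz2).elim
      | exact (Set.disjoint_left.mp hBD.symm hz1 hz2).elim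
      | exact (Set.disjoint_left.mp hCD.symm hz1 hz2).elim
  have hclique : ∀ X ∈ ({A, B, C, D} : Set (Set V)), G.IsClique X := by
    intro X hX
    simp only [Set.mem_insert_iff, Set.mem_singleton_iff] at hX
    rcases hX with rfl | rfl | rfl | rfl <;> assumption
  have hkey : ∀ a b x : V, H.Adj a b → H.Adj b x → c s(a, b) = c s(b, x) →
      a = x ∨ H.Adj a x := by
    intro a b x hab hbx hcc
    rw [hH, SimpleGraph.fromEdgeSet_adj, hS, Set.mem_union] at hab hbx
    obtain ⟨habS, habne⟩ := hab
    obtain ⟨hbxS, hbxne⟩ := hbx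
    by_cases h1 : s(a, b) ∈ M
    · by_cases h2 : s(b, x) ∈ M
      · by_cases hef : s(a, b) = s(b, x)
        · rw [Sym2.eq_iff] at hef
          rcases hef with ⟨rfl, rfl⟩ | ⟨rfl, -⟩
          · exact absurd rfl habne
          · exact Or.inl rfl
        · exact absurd (Sym2.mem_mk_left b x)
            (hmatching _ h1 _ h2 hef b (Sym2.mem_mk_right a b))
      · exact absurd hcc (by simp [hc, h1, h2])
    · by_cases h2 : s(b, x) ∈ M
      · exact absurd hcc (by simp [hc, h1, h2])
      · have habC := habS.resolve_right (by simpa using h1)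
        have hbxC := hbxS.resolve_right (by simpa using h2)
        obtain ⟨-, X, hXmem, hXall⟩ := habC
        obtain ⟨-, Y, hYmem, hYall⟩ := hbxC
        have haX : a ∈ X := hXall a (Sym2.mem_mk_left a b)
        have hbX : b ∈ X := hXall b (Sym2.mem_mk_right a b)
        have hbY : b ∈ Y := hYall b (Sym2.mem_mk_left b x)
        have hxY : x ∈ Y := hYall x (Sym2.mem_mk_right b x)
        have hXY : X = Y := hdisj X hXmem Y hYmem b hbX hbY
        subst hXY
        by_cases hax : a = x
        · exact Or.inl hax
        · refine Or.inr ?_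
          rw [hH, SimpleGraph.fromEdgeSet_adj, hS, Set.mem_union]
          refine ⟨Or.inl ⟨?_, X, hXmem, ?_⟩, hax⟩
          · exact (G.mem_edgeSet).mpr (hclique X hXmem haX hxY hax)
          · intro v hv
            rcases Sym2.mem_iff.mp hv with rfl | rfl
            · exact haX
            · exact hxY
  have hle : H ≤ G := by
    intro a b hab
    rw [hH, SimpleGraph.fromEdgeSet_adj, hS, Set.mem_union] at hab
    rcases hab with ⟨hmem | hm, -⟩
    · exact (G.mem_edgeSet).mp hmem.1
    · exact (G.mem_edgeSet).mp (hME hm)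
  have hpc : ProperlyConnected G c := by
    intro u v huv
    obtain ⟨p⟩ := hconn.preconnected u v
    obtain ⟨r, hr, hch⟩ := alt_path H c hkey p
    refine ⟨r.mapLe hle, (SimpleGraph.Walk.mapLe_isPath hle).mpr hr, ?_⟩
    have hedges : (r.mapLe hle).edges = r.edges := by
      have hid : ∀ e : Sym2 V, Sym2.map (⇑(SimpleGraph.Hom.ofLE hle)) e = e := by
        intro e
        refine Sym2.ind (fun x y => ?_) e
        rfl
      rw [SimpleGraph.Walk.mapLe, SimpleGraph.Walk.edges_map]
      exact (List.map_congr_left fun e _ => hid e).trans (List.map_id _)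
    rw [hedges, List.Chain', List.isChain_map]
    exact hch
  have hset : {e | e ∈ G.edgeSet ∧ c e ≠ 1} = (↑M : Set (Sym2 V)) := by
    ext e
    simp only [Set.mem_setOf_eq, Finset.mem_coe]
    constructor
    · rintro ⟨-, hne⟩
      by_contra hm
      simp [hc, hm] at hne
    · intro hm
      exact ⟨hME hm, by simp [hc, hm]⟩
  have himg : c '' {e | e ∈ G.edgeSet ∧ c e ≠ 1} = {2} := by
    rw [hset]
    ext n
    simp only [Set.mem_image, Set.mem_singleton_iff, Finset.mem_coe]
    constructor
    · rintro ⟨e, he, rfl⟩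
      simp [hc, he]
    · rintro rfl
      obtain ⟨e, he⟩ := Finset.card_pos.mp (by rw [hMcard]; norm_num)
      exact ⟨e, he, by simp [hc, he]⟩
  refine Nat.sInf_le ⟨c, hpc, ?_⟩
  rw [himg, hset, Set.ncard_coe_finset, hMcard, Set.ncard_singleton]
end

section
/- Let G be a connected simple graph with α(G) = 3. If G contains a 6-cycle x₁, y₁, x₂, y₂, x₃, y₃, x₁ such that both {x₁, x₂, x₃} and {y₁, y₂, y₃} are independent sets of G, then pc_opt(G) ≤ 4. -/
section Aux

open SimpleGraph

/-- There is a properly-colored path from `u` to `v`. -/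
def PP {V : Type*} (G : SimpleGraph V) (c : Sym2 V → ℕ) (u v : V) : Prop :=
  ∃ p : G.Walk u v, p.IsPath ∧ (p.edges.map c).Chain' (· ≠ ·)

lemma PP.symm {V : Type*} {G : SimpleGraph V} {c : Sym2 V → ℕ} {u v : V}
    (h : PP G c u v) : PP G c v u := by
  obtain ⟨p, hp, hcc⟩ := h
  refine ⟨p.reverse, hp.reverse, ?_⟩
  rw [SimpleGraph.Walk.edges_reverse, List.map_reverse, List.Chain', List.isChain_reverse]
  exact hcc.imp fun a b h e => h e.symm

lemma auxCycle {V : Type*} {G : SimpleGraph V} {c : Sym2 V → ℕ}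
    {x₁ y₁ x₂ y₂ : V}
    (n12 : x₁ ≠ y₁) (n13 : x₁ ≠ x₂) (n14 : x₁ ≠ y₂)
    (n23 : y₁ ≠ x₂) (n24 : y₁ ≠ y₂) (n34 : x₂ ≠ y₂)
    (e₁ : G.Adj x₁ y₁) (e₂ : G.Adj y₁ x₂) (e₃ : G.Adj x₂ y₂)
    (hc₁ : c s(x₁, y₁) = 2) (hc₂ : c s(y₁, x₂) = 1) (hc₃ : c s(x₂, y₂) = 2) :
    PP G c x₁ y₁ ∧ PP G c y₁ x₂ ∧ PP G c x₁ x₂ ∧ PP G c y₁ y₂ ∧ PP G c x₁ y₂ := by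
  refine ⟨⟨.cons e₁ .nil, ?_, ?_⟩, ⟨.cons e₂ .nil, ?_, ?_⟩,
    ⟨.cons e₁ (.cons e₂ .nil), ?_, ?_⟩, ⟨.cons e₂ (.cons e₃ .nil), ?_, ?_⟩,
    ⟨.cons e₁ (.cons e₂ (.cons e₃ .nil)), ?_, ?_⟩⟩ <;>
  simp [SimpleGraph.Walk.isPath_def, n12, n13, n14, n23, n24, n34, hc₁, hc₂, hc₃, List.Chain']

lemma auxOff {V : Type*} {G : SimpleGraph V} {c : Sym2 V → ℕ}
    {x₁ y₁ x₂ y₂ x₃ y₃ : V}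
    (hnodup : ([x₁, y₁, x₂, y₂, x₃, y₃] : List V).Nodup)
    (e₁ : G.Adj x₁ y₁) (e₂ : G.Adj y₁ x₂) (e₃ : G.Adj x₂ y₂)
    (e₄ : G.Adj y₂ x₃) (e₅ : G.Adj x₃ y₃)
    (hc₁ : c s(x₁, y₁) = 2) (hc₂ : c s(y₁, x₂) = 1) (hc₃ : c s(x₂, y₂) = 2)
    (hc₄ : c s(y₂, x₃) = 1) (hc₅ : c s(x₃, y₃) = 2)
    (hoff : ∀ a b : V, a ≠ x₁ → a ≠ y₁ → a ≠ x₂ → a ≠ y₂ → a ≠ x₃ → a ≠ y₃ →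
      c s(a, b) = 1)
    {u : V} (hu1 : u ≠ x₁) (hu2 : u ≠ y₁) (hu3 : u ≠ x₂) (hu4 : u ≠ y₂)
    (hu5 : u ≠ x₃) (hu6 : u ≠ y₃) (hadj : G.Adj u x₁) :
    PP G c u x₁ ∧ PP G c u y₁ ∧ PP G c u x₂ ∧ PP G c u y₂ ∧ PP G c u x₃ ∧ PP G c u y₃ ∧
      ∀ v, v ≠ x₁ → v ≠ y₁ → v ≠ x₂ → v ≠ y₂ → v ≠ x₃ → v ≠ y₃ → v ≠ u →
        (G.Adj v y₁ ∨ G.Adj v y₂ ∨ G.Adj v y₃) → PP G c u v := by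
  simp only [List.nodup_cons, List.mem_cons, List.not_mem_nil, or_false,
    List.nodup_nil, and_true, not_or] at hnodup
  obtain ⟨⟨n12, n13, n14, n15, n16⟩, ⟨n23, n24, n25, n26⟩, ⟨n34, n35, n36⟩,
    ⟨n45, n46⟩, n56⟩ := hnodup
  have hcu : c s(u, x₁) = 1 := hoff u x₁ hu1 hu2 hu3 hu4 hu5 hu6
  have P1 : PP G c u x₁ := ⟨.cons hadj .nil, by
    simp [SimpleGraph.Walk.isPath_def, hu1], by simp [List.Chain']⟩
  have P2 : PP G c u y₁ := ⟨.cons hadj (.cons e₁ .nil), by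
    simp [SimpleGraph.Walk.isPath_def, hu1, hu2, n12], by simp [List.Chain', hcu, hc₁]⟩
  have P3 : PP G c u x₂ := ⟨.cons hadj (.cons e₁ (.cons e₂ .nil)), by
    simp [SimpleGraph.Walk.isPath_def, hu1, hu2, hu3, n12, n13, n23],
    by simp [List.Chain', hcu, hc₁, hc₂]⟩
  have P4 : PP G c u y₂ := ⟨.cons hadj (.cons e₁ (.cons e₂ (.cons e₃ .nil))), by
    simp [SimpleGraph.Walk.isPath_def, hu1, hu2, hu3, hu4, n12, n13, n14, n23, n24, n34],
    by simp [List.Chain', hcu, hc₁, hc₂, hc₃]⟩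
  have P5 : PP G c u x₃ :=
    ⟨.cons hadj (.cons e₁ (.cons e₂ (.cons e₃ (.cons e₄ .nil)))), by
      simp [SimpleGraph.Walk.isPath_def, hu1, hu2, hu3, hu4, hu5,
        n12, n13, n14, n15, n23, n24, n25, n34, n35, n45],
      by simp [List.Chain', hcu, hc₁, hc₂, hc₃, hc₄]⟩
  have P6 : PP G c u y₃ :=
    ⟨.cons hadj (.cons e₁ (.cons e₂ (.cons e₃ (.cons e₄ (.cons e₅ .nil))))), by
      simp [SimpleGraph.Walk.isPath_def, hu1, hu2, hu3, hu4, hu5, hu6,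
        n12, n13, n14, n15, n16, n23, n24, n25, n26, n34, n35, n36, n45, n46, n56],
      by simp [List.Chain', hcu, hc₁, hc₂, hc₃, hc₄, hc₅]⟩
  refine ⟨P1, P2, P3, P4, P5, P6, ?_⟩
  intro v hv1 hv2 hv3 hv4 hv5 hv6 hvu hadjv
  rcases hadjv with h | h | h
  · have hce : c s(y₁, v) = 1 := by
      rw [Sym2.eq_swap]; exact hoff v y₁ hv1 hv2 hv3 hv4 hv5 hv6
    exact ⟨.cons hadj (.cons e₁ (.cons h.symm .nil)), by
      simp [SimpleGraph.Walk.isPath_def, hu1, hu2, n12, Ne.symm hvu,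
        hv1.symm, hv2.symm], by simp [List.Chain', hcu, hc₁, hce]⟩
  · have hce : c s(y₂, v) = 1 := by
      rw [Sym2.eq_swap]; exact hoff v y₂ hv1 hv2 hv3 hv4 hv5 hv6
    exact ⟨.cons hadj (.cons e₁ (.cons e₂ (.cons e₃ (.cons h.symm .nil)))), by
      simp [SimpleGraph.Walk.isPath_def, hu1, hu2, hu3, hu4, n12, n13, n14, n23, n24, n34,
        Ne.symm hvu, hv1.symm, hv2.symm, hv3.symm, hv4.symm],
      by simp [List.Chain', hcu, hc₁, hc₂, hc₃, hce]⟩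
  · have hce : c s(y₃, v) = 1 := by
      rw [Sym2.eq_swap]; exact hoff v y₃ hv1 hv2 hv3 hv4 hv5 hv6
    exact ⟨.cons hadj (.cons e₁ (.cons e₂ (.cons e₃ (.cons e₄ (.cons e₅
        (.cons h.symm .nil)))))), by
      simp [SimpleGraph.Walk.isPath_def, hu1, hu2, hu3, hu4, hu5, hu6,
        n12, n13, n14, n15, n16, n23, n24, n25, n26, n34, n35, n36, n45, n46, n56,
        Ne.symm hvu, hv1.symm, hv2.symm, hv3.symm, hv4.symm, hv5.symm, hv6.symm],
      by simp [List.Chain', hcu, hc₁, hc₂, hc₃, hc₄, hc₅, hce]⟩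

end Aux

lemma indep_helper {V : Type*} [Fintype V] {G : SimpleGraph V} (hα : indepNum G = 3)
    {a b d : V} (hab : a ≠ b) (had : a ≠ d) (hbd : b ≠ d)
    (hind : IndepSet G {a, b, d})
    (w : V) (hwa : w ≠ a) (hwb : w ≠ b) (hwd : w ≠ d) :
    G.Adj w a ∨ G.Adj w b ∨ G.Adj w d := by
  classical
  by_contra hcon
  push_neg at hcon
  obtain ⟨nwa, nwb, nwd⟩ := hcon
  have hAB : ¬ G.Adj a b := hind (by simp) (by simp) hab
  have hAD : ¬ G.Adj a d := hind (by simp) (by simp) had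
  have hBD : ¬ G.Adj b d := hind (by simp) (by simp) hbd
  have hmem : (4 : ℕ) ∈ {n | ∃ t : Finset V, IndepSet G ↑t ∧ t.card = n} := by
    refine ⟨{w, a, b, d}, ?_, ?_⟩
    · intro p hp q hq hpq
      simp only [Finset.coe_insert, Set.mem_insert_iff, Finset.coe_singleton,
        Set.mem_singleton_iff] at hp hq
      rcases hp with rfl | rfl | rfl | rfl <;> rcases hq with rfl | rfl | rfl | rfl <;>
        first
          | exact absurd rfl hpq
          | assumption
          | exact fun h => nwa h.symm
          | exact fun h => nwb h.symm
          | exact fun h => nwd h.symm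
          | exact fun h => hAB h.symm
          | exact fun h => hAD h.symm
          | exact fun h => hBD h.symm
    · rw [Finset.card_insert_of_notMem (by simp [hwa, hwb, hwd]),
        Finset.card_insert_of_notMem (by simp [hab, had]),
        Finset.card_insert_of_notMem (by simp [hbd]), Finset.card_singleton]
  have hbdd : BddAbove {n | ∃ t : Finset V, IndepSet G ↑t ∧ t.card = n} := by
    refine ⟨Fintype.card V, ?_⟩
    rintro n ⟨t, -, rfl⟩
    exact Finset.card_le_univ t
  have h4 := le_csSup hbdd hmem
  have h3 : sSup {n | ∃ t : Finset V, IndepSet G ↑t ∧ t.card = n} = 3 := hα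
  omega

set_option maxHeartbeats 2000000 in
/-- If `G` is connected with `α(G) = 3` and has a 6-cycle
`x₁, y₁, x₂, y₂, x₃, y₃, x₁` such that both `{x₁, x₂, x₃}` and `{y₁, y₂, y₃}`
are independent sets of `G`, then `pc_opt(G) ≤ 4`. -/
theorem pcOpt_le_four_of_six_cycle {V : Type*} [Fintype V] (G : SimpleGraph V)
    (hG : G.Connected) (hα : indepNum G = 3)
    (x₁ y₁ x₂ y₂ x₃ y₃ : V)
    (hnodup : ([x₁, y₁, x₂, y₂, x₃, y₃] : List V).Nodup)
    (e₁ : G.Adj x₁ y₁) (e₂ : G.Adj y₁ x₂) (e₃ : G.Adj x₂ y₂)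
    (e₄ : G.Adj y₂ x₃) (e₅ : G.Adj x₃ y₃) (e₆ : G.Adj y₃ x₁)
    (hx : IndepSet G {x₁, x₂, x₃}) (hy : IndepSet G {y₁, y₂, y₃}) :
    pcOpt G ≤ 4 := by
  classical
  have hnd := hnodup
  simp only [List.nodup_cons, List.mem_cons, List.not_mem_nil, or_false,
    List.nodup_nil, and_true, not_or] at hnd
  obtain ⟨⟨n12, n13, n14, n15, n16⟩, ⟨n23, n24, n25, n26⟩, ⟨n34, n35, n36⟩,
    ⟨n45, n46⟩, n56, -⟩ := hnd
  -- rotated nodup lists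
  have hndB : ([x₂, y₂, x₃, y₃, x₁, y₁] : List V).Nodup := by
    simp only [List.nodup_cons, List.mem_cons, List.not_mem_nil, or_false,
      List.nodup_nil, and_true, not_or]
    exact ⟨⟨n34, n35, n36, (Ne.symm n13), (Ne.symm n23)⟩, ⟨n45, n46, (Ne.symm n14), (Ne.symm n24)⟩,
      ⟨n56, (Ne.symm n15), (Ne.symm n25)⟩, ⟨(Ne.symm n16), (Ne.symm n26)⟩, n12, not_false⟩
  have hndC : ([x₃, y₃, x₁, y₁, x₂, y₂] : List V).Nodup := by
    simp only [List.nodup_cons, List.mem_cons, List.not_mem_nil, or_false,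
      List.nodup_nil, and_true, not_or]
    exact ⟨⟨n56, (Ne.symm n15), (Ne.symm n25), (Ne.symm n35), (Ne.symm n45)⟩,
      ⟨(Ne.symm n16), (Ne.symm n26), (Ne.symm n36), (Ne.symm n46)⟩, ⟨n12, n13, n14⟩, ⟨n23, n24⟩, n34, not_false⟩
  -- the coloring
  set c : Sym2 V → ℕ :=
    fun e => if e = s(x₁, y₁) ∨ e = s(x₂, y₂) ∨ e = s(x₃, y₃) then 2 else 1 with hcdef
  have hval2 : ∀ a b : V, (s(a, b) = s(x₁, y₁) ∨ s(a, b) = s(x₂, y₂) ∨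
      s(a, b) = s(x₃, y₃)) → c s(a, b) = 2 := by
    intro a b h; rw [hcdef]; exact if_pos h
  have hval1 : ∀ a b : V, ¬(s(a, b) = s(x₁, y₁) ∨ s(a, b) = s(x₂, y₂) ∨
      s(a, b) = s(x₃, y₃)) → c s(a, b) = 1 := by
    intro a b h; rw [hcdef]; exact if_neg h
  have hc₁ : c s(x₁, y₁) = 2 := hval2 _ _ (by tauto)
  have hc₃ : c s(x₂, y₂) = 2 := hval2 _ _ (by tauto)
  have hc₅ : c s(x₃, y₃) = 2 := hval2 _ _ (by tauto)
  have hc₂ : c s(y₁, x₂) = 1 := hval1 _ _ (by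
    simp [Sym2.eq_iff, (Ne.symm n12), (Ne.symm n13), n23, n24, n25, n26, (Ne.symm n23), (Ne.symm n35)])
  have hc₄ : c s(y₂, x₃) = 1 := hval1 _ _ (by
    simp [Sym2.eq_iff, (Ne.symm n14), (Ne.symm n24), (Ne.symm n34), (Ne.symm n35), n45, n46, (Ne.symm n15)])
  have hc₆ : c s(y₃, x₁) = 1 := hval1 _ _ (by
    simp [Sym2.eq_iff, (Ne.symm n16), (Ne.symm n26), (Ne.symm n36), (Ne.symm n46), (Ne.symm n56), n12, n13, n15])
  have hoff : ∀ a b : V, a ≠ x₁ → a ≠ y₁ → a ≠ x₂ → a ≠ y₂ → a ≠ x₃ → a ≠ y₃ →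
      c s(a, b) = 1 := by
    intro a b h1 h2 h3 h4 h5 h6
    exact hval1 _ _ (by simp [Sym2.eq_iff, h1, h2, h3, h4, h5, h6])
  -- rotated hoff
  have hoffB : ∀ a b : V, a ≠ x₂ → a ≠ y₂ → a ≠ x₃ → a ≠ y₃ → a ≠ x₁ → a ≠ y₁ →
      c s(a, b) = 1 := fun a b h1 h2 h3 h4 h5 h6 => hoff a b h5 h6 h1 h2 h3 h4
  have hoffC : ∀ a b : V, a ≠ x₃ → a ≠ y₃ → a ≠ x₁ → a ≠ y₁ → a ≠ x₂ → a ≠ y₂ →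
      c s(a, b) = 1 := fun a b h1 h2 h3 h4 h5 h6 => hoff a b h3 h4 h5 h6 h1 h2
  -- adjacency of off-cycle vertices
  have hadjx : ∀ w : V, w ≠ x₁ → w ≠ x₂ → w ≠ x₃ →
      G.Adj w x₁ ∨ G.Adj w x₂ ∨ G.Adj w x₃ :=
    fun w h1 h2 h3 => indep_helper hα n13 n15 n35 hx w h1 h2 h3
  have hadjy : ∀ w : V, w ≠ y₁ → w ≠ y₂ → w ≠ y₃ →
      G.Adj w y₁ ∨ G.Adj w y₂ ∨ G.Adj w y₃ :=
    fun w h1 h2 h3 => indep_helper hα n24 n26 n46 hy w h1 h2 h3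
  have hPC : ProperlyConnected G c := by
    intro u v huv
    show PP G c u v
    obtain ⟨c1a, c1b, c1c, c1d, c1e⟩ := auxCycle n12 n13 n14 n23 n24 n34 e₁ e₂ e₃ hc₁ hc₂ hc₃
    obtain ⟨c2a, c2b, c2c, c2d, c2e⟩ := auxCycle n34 n35 n36 n45 n46 n56 e₃ e₄ e₅ hc₃ hc₄ hc₅
    obtain ⟨c3a, c3b, c3c, c3d, c3e⟩ :=
      auxCycle n56 (Ne.symm n15) (Ne.symm n25) (Ne.symm n16) (Ne.symm n26) n12 e₅ e₆ e₁ hc₅ hc₆ hc₁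
    by_cases hu : u = x₁ ∨ u = y₁ ∨ u = x₂ ∨ u = y₂ ∨ u = x₃ ∨ u = y₃
    · by_cases hv : v = x₁ ∨ v = y₁ ∨ v = x₂ ∨ v = y₂ ∨ v = x₃ ∨ v = y₃
      · -- both on the cycle
        rcases hu with rfl | rfl | rfl | rfl | rfl | rfl <;>
          rcases hv with rfl | rfl | rfl | rfl | rfl | rfl <;>
          first
            | exact absurd rfl huv
            | exact c1a | exact c1a.symm | exact c1b | exact c1b.symm
            | exact c1c | exact c1c.symm | exact c1d | exact c1d.symm
            | exact c1e | exact c1e.symm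
            | exact c2a | exact c2a.symm | exact c2b | exact c2b.symm
            | exact c2c | exact c2c.symm | exact c2d | exact c2d.symm
            | exact c2e | exact c2e.symm
            | exact c3a | exact c3a.symm | exact c3b | exact c3b.symm
            | exact c3c | exact c3c.symm | exact c3d | exact c3d.symm
            | exact c3e | exact c3e.symm
      · -- u on the cycle, v off
        push_neg at hv
        obtain ⟨hv1, hv2, hv3, hv4, hv5, hv6⟩ := hv
        rcases hadjx v hv1 hv3 hv5 with h | h | h
        · obtain ⟨p1, p2, p3, p4, p5, p6, -⟩ :=
            auxOff hnodup e₁ e₂ e₃ e₄ e₅ hc₁ hc₂ hc₃ hc₄ hc₅ hoff hv1 hv2 hv3 hv4 hv5 hv6 h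
          rcases hu with rfl | rfl | rfl | rfl | rfl | rfl <;>
            first
              | exact p1.symm
              | exact p2.symm
              | exact p3.symm
              | exact p4.symm
              | exact p5.symm
              | exact p6.symm
        · obtain ⟨p1, p2, p3, p4, p5, p6, -⟩ :=
            auxOff hndB e₃ e₄ e₅ e₆ e₁ hc₃ hc₄ hc₅ hc₆ hc₁ hoffB hv3 hv4 hv5 hv6 hv1 hv2 h
          rcases hu with rfl | rfl | rfl | rfl | rfl | rfl <;>
            first
              | exact p1.symm
              | exact p2.symm
              | exact p3.symm
              | exact p4.symm
              | exact p5.symm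
              | exact p6.symm
        · obtain ⟨p1, p2, p3, p4, p5, p6, -⟩ :=
            auxOff hndC e₅ e₆ e₁ e₂ e₃ hc₅ hc₆ hc₁ hc₂ hc₃ hoffC hv5 hv6 hv1 hv2 hv3 hv4 h
          rcases hu with rfl | rfl | rfl | rfl | rfl | rfl <;>
            first
              | exact p1.symm
              | exact p2.symm
              | exact p3.symm
              | exact p4.symm
              | exact p5.symm
              | exact p6.symm
    · -- u off the cycle
      push_neg at hu
      obtain ⟨hu1, hu2, hu3, hu4, hu5, hu6⟩ := hu
      by_cases hv : v = x₁ ∨ v = y₁ ∨ v = x₂ ∨ v = y₂ ∨ v = x₃ ∨ v = y₃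
      · rcases hadjx u hu1 hu3 hu5 with h | h | h
        · obtain ⟨p1, p2, p3, p4, p5, p6, -⟩ :=
            auxOff hnodup e₁ e₂ e₃ e₄ e₅ hc₁ hc₂ hc₃ hc₄ hc₅ hoff hu1 hu2 hu3 hu4 hu5 hu6 h
          rcases hv with rfl | rfl | rfl | rfl | rfl | rfl <;>
            first
              | exact p1
              | exact p2
              | exact p3
              | exact p4
              | exact p5
              | exact p6
        · obtain ⟨p1, p2, p3, p4, p5, p6, -⟩ :=
            auxOff hndB e₃ e₄ e₅ e₆ e₁ hc₃ hc₄ hc₅ hc₆ hc₁ hoffB hu3 hu4 hu5 hu6 hu1 hu2 h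
          rcases hv with rfl | rfl | rfl | rfl | rfl | rfl <;>
            first
              | exact p1
              | exact p2
              | exact p3
              | exact p4
              | exact p5
              | exact p6
        · obtain ⟨p1, p2, p3, p4, p5, p6, -⟩ :=
            auxOff hndC e₅ e₆ e₁ e₂ e₃ hc₅ hc₆ hc₁ hc₂ hc₃ hoffC hu5 hu6 hu1 hu2 hu3 hu4 h
          rcases hv with rfl | rfl | rfl | rfl | rfl | rfl <;>
            first
              | exact p1
              | exact p2
              | exact p3
              | exact p4
              | exact p5
              | exact p6
      · -- both off the cycle
        push_neg at hv
        obtain ⟨hv1, hv2, hv3, hv4, hv5, hv6⟩ := hv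
        have hvy := hadjy v hv2 hv4 hv6
        rcases hadjx u hu1 hu3 hu5 with h | h | h
        · obtain ⟨-, -, -, -, -, -, pl⟩ :=
            auxOff hnodup e₁ e₂ e₃ e₄ e₅ hc₁ hc₂ hc₃ hc₄ hc₅ hoff hu1 hu2 hu3 hu4 hu5 hu6 h
          exact pl v hv1 hv2 hv3 hv4 hv5 hv6 huv.symm (by tauto)
        · obtain ⟨-, -, -, -, -, -, pl⟩ :=
            auxOff hndB e₃ e₄ e₅ e₆ e₁ hc₃ hc₄ hc₅ hc₆ hc₁ hoffB hu3 hu4 hu5 hu6 hu1 hu2 h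
          exact pl v hv3 hv4 hv5 hv6 hv1 hv2 huv.symm (by tauto)
        · obtain ⟨-, -, -, -, -, -, pl⟩ :=
            auxOff hndC e₅ e₆ e₁ e₂ e₃ hc₅ hc₆ hc₁ hc₂ hc₃ hoffC hu5 hu6 hu1 hu2 hu3 hu4 h
          exact pl v hv5 hv6 hv1 hv2 hv3 hv4 huv.symm (by tauto)
  -- count the recolored edges and new colors
  have hset : {e | e ∈ G.edgeSet ∧ c e ≠ 1} =
      {s(x₁, y₁), s(x₂, y₂), s(x₃, y₃)} := by
    ext e
    simp only [Set.mem_setOf_eq, Set.mem_insert_iff, Set.mem_singleton_iff]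
    constructor
    · rintro ⟨-, hne⟩
      by_contra h
      push_neg at h
      exact hne (by rw [hcdef]; exact if_neg (by tauto))
    · rintro (rfl | rfl | rfl)
      exacts [⟨G.mem_edgeSet.mpr e₁, by rw [hc₁]; decide⟩,
        ⟨G.mem_edgeSet.mpr e₃, by rw [hc₃]; decide⟩,
        ⟨G.mem_edgeSet.mpr e₅, by rw [hc₅]; decide⟩]
  have himg : c '' {e | e ∈ G.edgeSet ∧ c e ≠ 1} = {2} := by
    rw [hset]
    simp [Set.image_insert_eq, hc₁, hc₃, hc₅]
  have hne12 : s(x₁, y₁) ≠ s(x₂, y₂) := by simp [Sym2.eq_iff, n13, n14, n23, n24]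
  have hne13 : s(x₁, y₁) ≠ s(x₃, y₃) := by simp [Sym2.eq_iff, n15, n16, n25, n26]
  have hne23 : s(x₂, y₂) ≠ s(x₃, y₃) := by simp [Sym2.eq_iff, n35, n36, n45, n46]
  have hcard : ({s(x₁, y₁), s(x₂, y₂), s(x₃, y₃)} : Set (Sym2 V)).ncard = 3 := by
    rw [Set.ncard_insert_of_notMem (by simp [hne12, hne13]), Set.ncard_pair hne23]
  apply Nat.sInf_le
  refine ⟨c, hPC, ?_⟩
  rw [himg, hset, hcard, Set.ncard_singleton]
end

section
/- For every integer m ≥ 2, the star K_{1,m} satisfies pc_opt(K_{1,m}) = 2m − 2 = 2·α(K_{1,m}) − 2. -/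
namespace StarAux

def SG (m : ℕ) : SimpleGraph (Fin (m+1)) := SimpleGraph.fromRel (fun u _ => u = 0)

variable {m : ℕ}

lemma adj_iff {u v : Fin (m+1)} : (SG m).Adj u v ↔ u ≠ v ∧ (u = 0 ∨ v = 0) := by
  simp [SG, SimpleGraph.fromRel_adj]

def fe (m : ℕ) (i : Fin (m+1)) : Sym2 (Fin (m+1)) := s(0, i)

lemma fe_inj : Function.Injective (fe m) := by
  intro i j h
  simp only [fe, Sym2.eq, Sym2.rel_iff', Prod.mk.injEq, Prod.swap_prod_mk] at h
  rcases h with ⟨-, h⟩ | ⟨h1, h2⟩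
  · exact h
  · rw [← h1, h2]

lemma mem_edgeSet_iff {e : Sym2 (Fin (m+1))} :
    e ∈ (SG m).edgeSet ↔ ∃ i, i ≠ 0 ∧ e = fe m i := by
  constructor
  · intro he
    induction e using Sym2.ind with
    | _ u v =>
      rw [SimpleGraph.mem_edgeSet, adj_iff] at he
      obtain ⟨huv, h0 | h0⟩ := he
      · exact ⟨v, by rintro rfl; exact huv h0, by rw [h0]; rfl⟩
      · exact ⟨u, by rintro rfl; exact huv h0.symm, by rw [h0, fe]; exact Sym2.eq_swap.symm⟩
  · rintro ⟨i, hi, rfl⟩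
    show s(0,i) ∈ _
    rw [SimpleGraph.mem_edgeSet, adj_iff]
    exact ⟨Ne.symm hi, Or.inl rfl⟩

lemma edgeSet_eq : (SG m).edgeSet = fe m '' {i | i ≠ 0} := by
  ext e; rw [mem_edgeSet_iff]; simp [eq_comm]

lemma edgeSet_ncard : ((SG m).edgeSet).ncard = m := by
  rw [edgeSet_eq, Set.ncard_image_of_injective _ fe_inj]
  have : ({i | i ≠ 0} : Set (Fin (m+1))) = {(0 : Fin (m+1))}ᶜ := by ext; simp
  rw [this]
  have := Set.ncard_add_ncard_compl ({(0:Fin (m+1))} : Set (Fin (m+1)))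
  rw [Set.ncard_singleton, Nat.card_eq_fintype_card, Fintype.card_fin] at this
  omega

end StarAux
namespace StarAux

lemma path_edges {m : ℕ} {u v : Fin (m+1)} (hu : u ≠ 0) (hv : v ≠ 0) (huv : u ≠ v)
    (p : (SG m).Walk u v) (hp : p.IsPath) :
    p.edges = [s(u, 0), s(0, v)] := by
  cases p with
  | nil => exact absurd rfl huv
  | cons h q =>
    rename_i w
    have hw : w = 0 := by
      rcases (adj_iff.mp h).2 with h0 | h0
      · exact absurd h0 hu
      · exact h0
    subst hw
    cases q with
    | nil => exact absurd rfl hv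
    | cons h' r =>
      rename_i w'
      have hw' : w' ≠ 0 := (adj_iff.mp h').1.symm
      cases r with
      | nil => simp
      | cons h'' s =>
        rename_i x
        have hx : x = 0 := by
          rcases (adj_iff.mp h'').2 with h0 | h0
          · exact absurd h0 hw'
          · exact h0
        subst hx
        exfalso
        have := hp.support_nodup
        simp at this

end StarAux
namespace StarAux

lemma c_injOn {m : ℕ} {c : Sym2 (Fin (m+1)) → ℕ} (hc : ProperlyConnected (SG m) c) :
    Set.InjOn c ((SG m).edgeSet) := by
  rintro e1 he1 e2 he2 hce
  obtain ⟨i, hi, rfl⟩ := mem_edgeSet_iff.mp he1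
  obtain ⟨j, hj, rfl⟩ := mem_edgeSet_iff.mp he2
  by_contra hne
  have hij : i ≠ j := fun h => hne (by rw [h])
  obtain ⟨p, hp, hchain⟩ := hc i j hij
  rw [path_edges hi hj hij p hp] at hchain
  simp [List.Chain', List.isChain_cons_cons] at hchain
  apply hchain
  have : s(i, (0:Fin (m+1))) = fe m i := Sym2.eq_swap
  rw [this, hce]
  rfl

lemma lower_bound {m : ℕ} (hm : 2 ≤ m) {c : Sym2 (Fin (m+1)) → ℕ}
    (hc : ProperlyConnected (SG m) c) :
    2 * m - 2 ≤ {e | e ∈ (SG m).edgeSet ∧ c e ≠ 1}.ncard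
      + (c '' {e | e ∈ (SG m).edgeSet ∧ c e ≠ 1}).ncard := by
  set R := {e | e ∈ (SG m).edgeSet ∧ c e ≠ 1} with hR
  have hinj := c_injOn hc
  have hRsub : R ⊆ (SG m).edgeSet := fun e he => he.1
  have hfin : ((SG m).edgeSet : Set (Sym2 (Fin (m+1)))).Finite := Set.toFinite _
  -- T = edges colored 1
  set T := {e | e ∈ (SG m).edgeSet ∧ c e = 1} with hT
  have hTsub : T ⊆ (SG m).edgeSet := fun e he => he.1
  have hTcard : T.ncard ≤ 1 := by
    rw [Set.ncard_le_one_iff (hfin.subset hTsub)]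
    intro a b ha hb
    exact hinj ha.1 hb.1 (by rw [ha.2, hb.2])
  have hRT : R = (SG m).edgeSet \ T := by
    ext e; simp [hR, hT]
  have hRcard : m - 1 ≤ R.ncard := by
    rw [hRT, Set.ncard_diff hTsub (hfin.subset hTsub)]
    rw [edgeSet_ncard]
    omega
  have himg : (c '' R).ncard = R.ncard := Set.ncard_image_of_injOn (hinj.mono hRsub)
  rw [himg]
  omega

end StarAux
namespace StarAux

def cw (m : ℕ) : Sym2 (Fin (m+1)) → ℕ :=
  Sym2.lift ⟨fun u v => max u.1 v.1, fun _ _ => max_comm _ _⟩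

lemma cw_mk (u v : Fin (m+1)) : cw m s(u,v) = max u.1 v.1 := rfl

lemma cw_fe (i : Fin (m+1)) : cw m (fe m i) = i.1 := by
  show max (0:Fin (m+1)).1 i.1 = i.1
  simp

lemma pc_cw (m : ℕ) : ProperlyConnected (SG m) (cw m) := by
  intro u v huv
  by_cases hu : u = 0
  · subst hu
    have h : (SG m).Adj 0 v := adj_iff.mpr ⟨huv, Or.inl rfl⟩
    exact ⟨.cons h .nil, by simp [huv], by simp [List.Chain']⟩
  · by_cases hv : v = 0
    · subst hv
      have h : (SG m).Adj u 0 := adj_iff.mpr ⟨huv, Or.inr rfl⟩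
      exact ⟨.cons h .nil, by simp [hu], by simp [List.Chain']⟩
    · have h1 : (SG m).Adj u 0 := adj_iff.mpr ⟨hu, Or.inr rfl⟩
      have h2 : (SG m).Adj 0 v := adj_iff.mpr ⟨Ne.symm hv, Or.inl rfl⟩
      refine ⟨.cons h1 (.cons h2 .nil), ?_, ?_⟩
      · simp [SimpleGraph.Walk.isPath_def]
        exact ⟨⟨hu, huv⟩, Ne.symm hv⟩
      · simp [cw_mk, List.Chain', List.isChain_cons_cons]
        intro h
        exact huv (Fin.val_injective (by
          have : max u.1 0 = u.1 := by simp
          have h2 : max (0:ℕ) v.1 = v.1 := by simp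
          omega))

lemma upper_mem (m : ℕ) (hm : 2 ≤ m) :
    (2*m-2) ∈ {n | ∃ c : Sym2 (Fin (m+1)) → ℕ, ProperlyConnected (SG m) c ∧
      n = {e | e ∈ (SG m).edgeSet ∧ c e ≠ 1}.ncard
        + ((c '' {e | e ∈ (SG m).edgeSet ∧ c e ≠ 1}).ncard)} := by
  refine ⟨cw m, pc_cw m, ?_⟩
  have hb : (1:ℕ) < m + 1 := by omega
  set a : Fin (m+1) := 0 with ha
  set b : Fin (m+1) := ⟨1, hb⟩ with hbdef
  set S : Set (Fin (m+1)) := ({a, b} : Set (Fin (m+1)))ᶜ with hS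
  have hRS : {e | e ∈ (SG m).edgeSet ∧ cw m e ≠ 1} = fe m '' S := by
    ext e
    simp only [Set.mem_setOf_eq, mem_edgeSet_iff]
    constructor
    · rintro ⟨⟨i, hi, rfl⟩, hc⟩
      rw [cw_fe] at hc
      refine ⟨i, ?_, rfl⟩
      simp only [hS, Set.mem_compl_iff, Set.mem_insert_iff, Set.mem_singleton_iff, ha, hbdef, Fin.ext_iff, Fin.val_zero, not_or]
      exact ⟨fun h => hi (Fin.ext h), hc⟩
    · rintro ⟨i, hiS, rfl⟩
      simp only [hS, Set.mem_compl_iff, Set.mem_insert_iff, Set.mem_singleton_iff, ha, hbdef, Fin.ext_iff, Fin.val_zero, not_or] at hiS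
      exact ⟨⟨i, fun h => hiS.1 (by rw [h]; rfl), rfl⟩, by rw [cw_fe]; exact hiS.2⟩
  have hScard : S.ncard = m - 1 := by
    have hab : a ≠ b := by simp [ha, hbdef, Fin.ext_iff]
    have h2 : ({a, b} : Set (Fin (m+1))).ncard = 2 := Set.ncard_pair hab
    have := Set.ncard_add_ncard_compl ({a, b} : Set (Fin (m+1)))
    rw [h2, Nat.card_eq_fintype_card, Fintype.card_fin] at this
    rw [hS]
    omega
  rw [hRS, Set.ncard_image_of_injective _ fe_inj]
  have himg : cw m '' (fe m '' S) = Fin.val '' S := by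
    rw [← Set.image_comp]
    apply Set.image_congr
    intro i _
    exact cw_fe i
  rw [himg, Set.ncard_image_of_injective _ Fin.val_injective, hScard]
  omega

end StarAux
namespace StarAux

lemma indep_num_eq (m : ℕ) (hm : 2 ≤ m) : indepNum (SG m) = m := by
  unfold indepNum
  have hmem : m ∈ {n | ∃ t : Finset (Fin (m+1)), IndepSet (SG m) ↑t ∧ t.card = n} := by
    refine ⟨Finset.univ \ {0}, ?_, ?_⟩
    · intro u hu v hv huv
      have hu' : u ≠ 0 := by
        have := hu; simp only [Finset.coe_sdiff, Finset.coe_univ, Set.mem_diff,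
          Finset.coe_singleton, Set.mem_singleton_iff] at this
        exact this.2
      rw [adj_iff]
      push_neg
      intro _
      have hv' : v ≠ 0 := by
        have := hv; simp only [Finset.coe_sdiff, Finset.coe_univ, Set.mem_diff,
          Finset.coe_singleton, Set.mem_singleton_iff] at this
        exact this.2
      exact ⟨hu', hv'⟩
    · rw [Finset.card_sdiff_of_subset (Finset.subset_univ _), Finset.card_singleton, Finset.card_univ, Fintype.card_fin]; omega
  have hbound : ∀ n ∈ {n | ∃ t : Finset (Fin (m+1)), IndepSet (SG m) ↑t ∧ t.card = n},
      n ≤ m := by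
    rintro n ⟨t, hind, rfl⟩
    by_cases h0 : (0 : Fin (m+1)) ∈ t
    · have : t ⊆ {0} := by
        intro v hv
        by_contra hne
        simp at hne
        exact hind (by simpa using h0) (by simpa using hv)
          (Ne.symm hne) (adj_iff.mpr ⟨Ne.symm hne, Or.inl rfl⟩)
      calc t.card ≤ ({0} : Finset (Fin (m+1))).card := Finset.card_le_card this
        _ = 1 := Finset.card_singleton _
        _ ≤ m := by omega
    · have : t ⊆ Finset.univ \ {0} := by
        intro v hv
        rw [Finset.mem_sdiff, Finset.mem_singleton]
        exact ⟨Finset.mem_univ v, fun h => h0 (h ▸ hv)⟩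
      calc t.card ≤ (Finset.univ \ {0} : Finset (Fin (m+1))).card :=
          Finset.card_le_card this
        _ = m := by rw [Finset.card_sdiff_of_subset (Finset.subset_univ _), Finset.card_singleton, Finset.card_univ, Fintype.card_fin]; omega
  exact le_antisymm (csSup_le ⟨m, hmem⟩ hbound) (le_csSup ⟨m, hbound⟩ hmem)

end StarAux

/-- For every `m ≥ 2`, the star `K_{1,m}` (center `0` joined to `m` leaves)
satisfies `pc_opt(K_{1,m}) = 2m − 2 = 2α(K_{1,m}) − 2`. -/
theorem pcOpt_star (m : ℕ) (hm : 2 ≤ m) :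
    pcOpt (SimpleGraph.fromRel (fun u _ : Fin (m + 1) => u = 0)) = 2 * m - 2 ∧
    2 * m - 2 = 2 * indepNum (SimpleGraph.fromRel (fun u _ : Fin (m + 1) => u = 0)) - 2 := by
  constructor
  · show pcOpt (StarAux.SG m) = 2 * m - 2
    unfold pcOpt
    refine le_antisymm (Nat.sInf_le (StarAux.upper_mem m hm)) ?_
    refine le_csInf ⟨_, StarAux.upper_mem m hm⟩ ?_
    rintro n ⟨c, hc, rfl⟩
    exact StarAux.lower_bound hm hc
  · show 2 * m - 2 = 2 * indepNum (StarAux.SG m) - 2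
    rw [StarAux.indep_num_eq m hm]
end
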